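/- arXiv:1405.6908 — 2 statements merged into one kernel-verified Lean document; each statement's English description precedes it below -/
import Mathlib

section
/- (Lemma 1) Fix a pmf ρ on X0 and a channel Γ : X1 → (pmf on Y). For any two (ρ,Γ)-admissible pmfs Q1, Q2 on X0 × X1 × X2 × Y and any λ ∈ [0,1], the convex combination λQ1 + (1−λ)Q2 is again (ρ,Γ)-admissible, and Φ(λQ1 + (1−λ)Q2) ≤ λ·Φ(Q1) + (1−λ)·Φ(Q2); that is, the function Φ(Q) = I_Q(X0;X2) − I_Q(X1;Y|X0,X2) is convex on the set of (ρ,Γ)-admissible distributions. -/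
open scoped BigOperators

/-- A probability mass function on a finite set. -/
def IsPmf {S : Type*} [Fintype S] (q : S → ℝ) : Prop :=
  (∀ s, 0 ≤ q s) ∧ ∑ s, q s = 1

section Defs

variable {X0 X1 X2 Y : Type*} [Fintype X0] [Fintype X1] [Fintype X2] [Fintype Y]

/-- Marginal on `X0`. -/
noncomputable def margX0 (Q : X0 × X1 × X2 × Y → ℝ) (x0 : X0) : ℝ :=
  ∑ x1, ∑ x2, ∑ y, Q (x0, x1, x2, y)

/-- Marginal on `X2`. -/
noncomputable def margX2 (Q : X0 × X1 × X2 × Y → ℝ) (x2 : X2) : ℝ :=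
  ∑ x0, ∑ x1, ∑ y, Q (x0, x1, x2, y)

/-- Marginal on `(X0, X2)`. -/
noncomputable def margX0X2 (Q : X0 × X1 × X2 × Y → ℝ) (x0 : X0) (x2 : X2) : ℝ :=
  ∑ x1, ∑ y, Q (x0, x1, x2, y)

/-- Marginal on `(X0, X2, Y)`. -/
noncomputable def margX0X2Y (Q : X0 × X1 × X2 × Y → ℝ) (x0 : X0) (x2 : X2) (y : Y) : ℝ :=
  ∑ x1, Q (x0, x1, x2, y)

/-- Marginal on `(X0, X1, X2)`. -/
noncomputable def margX0X1X2 (Q : X0 × X1 × X2 × Y → ℝ) (x0 : X0) (x1 : X1) (x2 : X2) : ℝ :=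
  ∑ y, Q (x0, x1, x2, y)

/-- Entropy `H_Q(X0)` (natural log, `0 log 0 = 0` holds by `Real.log 0 = 0`). -/
noncomputable def H_X0 (Q : X0 × X1 × X2 × Y → ℝ) : ℝ :=
  -∑ x0, margX0 Q x0 * Real.log (margX0 Q x0)

/-- Entropy `H_Q(X2)`. -/
noncomputable def H_X2 (Q : X0 × X1 × X2 × Y → ℝ) : ℝ :=
  -∑ x2, margX2 Q x2 * Real.log (margX2 Q x2)

/-- Joint entropy `H_Q(X0, X2)`. -/
noncomputable def H_X0X2 (Q : X0 × X1 × X2 × Y → ℝ) : ℝ :=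
  -∑ x0, ∑ x2, margX0X2 Q x0 x2 * Real.log (margX0X2 Q x0 x2)

/-- Conditional entropy `H_Q(Y, X0 | X2)` (terms with zero mass contribute `0`
since `0 * log _ = 0` and `Real.log 0 = 0`, `0 / 0 = 0`). -/
noncomputable def HcondYX0_X2 (Q : X0 × X1 × X2 × Y → ℝ) : ℝ :=
  -∑ x0, ∑ x2, ∑ y,
    margX0X2Y Q x0 x2 y * Real.log (margX0X2Y Q x0 x2 y / margX2 Q x2)

/-- Conditional entropy `H_Q(Y | X0, X2)`. -/
noncomputable def HcondY_X0X2 (Q : X0 × X1 × X2 × Y → ℝ) : ℝ :=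
  -∑ x0, ∑ x2, ∑ y,
    margX0X2Y Q x0 x2 y * Real.log (margX0X2Y Q x0 x2 y / margX0X2 Q x0 x2)

/-- Conditional entropy `H_Q(Y | X0, X1, X2)`. -/
noncomputable def HcondY_X0X1X2 (Q : X0 × X1 × X2 × Y → ℝ) : ℝ :=
  -∑ x0, ∑ x1, ∑ x2, ∑ y,
    Q (x0, x1, x2, y) * Real.log (Q (x0, x1, x2, y) / margX0X1X2 Q x0 x1 x2)

/-- Mutual information `I_Q(X0; X2) = H(X0) + H(X2) - H(X0, X2)`. -/
noncomputable def mutI_X0X2 (Q : X0 × X1 × X2 × Y → ℝ) : ℝ :=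
  H_X0 Q + H_X2 Q - H_X0X2 Q

/-- Conditional mutual information `I_Q(X1; Y | X0, X2)`. -/
noncomputable def condMutI_X1Y_X0X2 (Q : X0 × X1 × X2 × Y → ℝ) : ℝ :=
  HcondY_X0X2 Q - HcondY_X0X1X2 Q

/-- `Φ(Q) = I_Q(X0; X2) - I_Q(X1; Y | X0, X2)`. -/
noncomputable def Phi (Q : X0 × X1 × X2 × Y → ℝ) : ℝ :=
  mutI_X0X2 Q - condMutI_X1Y_X0X2 Q

/-- A channel `Γ : X1 → Δ(Y)`. -/
def IsChannel (Γ : X1 → Y → ℝ) : Prop :=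
  ∀ x1, (∀ y, 0 ≤ Γ x1 y) ∧ ∑ y, Γ x1 y = 1

/-- `(ρ, Γ)`-admissibility: `Q` is a pmf whose `X0`-marginal is `ρ` and which
factorizes through the channel `Γ`. -/
def IsAdmissible (ρ : X0 → ℝ) (Γ : X1 → Y → ℝ) (Q : X0 × X1 × X2 × Y → ℝ) : Prop :=
  IsPmf Q ∧ (∀ x0, margX0 Q x0 = ρ x0) ∧
    ∀ x0 x1 x2 y, Q (x0, x1, x2, y) = Γ x1 y * margX0X1X2 Q x0 x1 x2

end Defs

lemma log_ge_one_sub_inv {t : ℝ} (ht : 0 < t) : 1 - 1/t ≤ Real.log t := by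
  have h := Real.log_le_sub_one_of_pos (show (0:ℝ) < 1/t by positivity)
  rw [Real.log_div one_ne_zero (ne_of_gt ht), Real.log_one] at h
  linarith

lemma term_lb {a b s : ℝ} (ha : 0 ≤ a) (hab : a ≤ b) (hs : 0 < s) :
    a * Real.log s + (a - b * s) ≤ a * Real.log (a / b) := by
  rcases eq_or_lt_of_le ha with h | h
  · simp only [← h, zero_mul, zero_add, zero_sub, zero_div, Real.log_zero, mul_zero]
    nlinarith
  · have hb : 0 < b := lt_of_lt_of_le h hab
    have ht : 0 < a / (b * s) := by positivity
    have hlog := log_ge_one_sub_inv ht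
    have h1 : Real.log (a / b) = Real.log s + Real.log (a / (b * s)) := by
      rw [Real.log_div (ne_of_gt h) (ne_of_gt hb),
        Real.log_div (ne_of_gt h) (by positivity),
        Real.log_mul (ne_of_gt hb) (ne_of_gt hs)]
      ring
    have h2 : a * (1 - 1/(a/(b*s))) = a - b * s := by
      field_simp
    nlinarith [mul_le_mul_of_nonneg_left hlog (le_of_lt h)]

lemma logsum2 {a1 a2 b1 b2 : ℝ} (h1 : 0 ≤ a1) (h2 : 0 ≤ a2)
    (hb1 : a1 ≤ b1) (hb2 : a2 ≤ b2) :
    (a1 + a2) * Real.log ((a1 + a2) / (b1 + b2)) ≤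
      a1 * Real.log (a1 / b1) + a2 * Real.log (a2 / b2) := by
  rcases eq_or_lt_of_le (by linarith : (0:ℝ) ≤ a1 + a2) with h | h
  · have ha1 : a1 = 0 := by linarith
    have ha2 : a2 = 0 := by linarith
    simp [ha1, ha2]
  · have hb : 0 < b1 + b2 := lt_of_lt_of_le h (by linarith)
    have hspos : 0 < (a1 + a2) / (b1 + b2) := div_pos h hb
    have t1 := term_lb h1 hb1 hspos
    have t2 := term_lb h2 hb2 hspos
    have hsum : b1 * ((a1+a2)/(b1+b2)) + b2 * ((a1+a2)/(b1+b2)) = a1 + a2 := by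
      field_simp
    nlinarith

lemma f_smul (c a b : ℝ) (hc : 0 ≤ c) :
    (c * a) * Real.log ((c * a) / (c * b)) = c * (a * Real.log (a / b)) := by
  rcases eq_or_lt_of_le hc with h | h
  · simp [← h]
  · rw [mul_div_mul_left _ _ (ne_of_gt h)]
    ring

lemma key_ineq {a1 a2 b1 b2 lam : ℝ} (h1 : 0 ≤ a1) (h2 : 0 ≤ a2)
    (hb1 : a1 ≤ b1) (hb2 : a2 ≤ b2) (hl0 : 0 ≤ lam) (hl1 : lam ≤ 1) :
    (lam * a1 + (1 - lam) * a2) *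
        Real.log ((lam * a1 + (1 - lam) * a2) / (lam * b1 + (1 - lam) * b2)) ≤
      lam * (a1 * Real.log (a1 / b1)) + (1 - lam) * (a2 * Real.log (a2 / b2)) := by
  have hm : (0:ℝ) ≤ 1 - lam := by linarith
  calc (lam * a1 + (1 - lam) * a2) *
        Real.log ((lam * a1 + (1 - lam) * a2) / (lam * b1 + (1 - lam) * b2))
      ≤ (lam * a1) * Real.log ((lam * a1) / (lam * b1)) +
        ((1 - lam) * a2) * Real.log (((1 - lam) * a2) / ((1 - lam) * b2)) :=
        logsum2 (mul_nonneg hl0 h1) (mul_nonneg hm h2)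
          (mul_le_mul_of_nonneg_left hb1 hl0) (mul_le_mul_of_nonneg_left hb2 hm)
    _ = _ := by rw [f_smul lam a1 b1 hl0, f_smul (1-lam) a2 b2 hm]

section MargAux
variable {X0 X1 X2 Y : Type*} [Fintype X0] [Fintype X1] [Fintype X2] [Fintype Y]
variable (Q Q1 Q2 : X0 × X1 × X2 × Y → ℝ) (lam : ℝ)

lemma margX2_eq_sum (x2 : X2) : margX2 Q x2 = ∑ x0, margX0X2 Q x0 x2 := rfl

lemma margX0X2_eq_sum (x0 : X0) (x2 : X2) :
    margX0X2 Q x0 x2 = ∑ y, margX0X2Y Q x0 x2 y := by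
  simp only [margX0X2, margX0X2Y]
  exact Finset.sum_comm

lemma margX0X2Y_nonneg (hQ : ∀ v, 0 ≤ Q v) (x0 : X0) (x2 : X2) (y : Y) :
    0 ≤ margX0X2Y Q x0 x2 y :=
  Finset.sum_nonneg fun _ _ => hQ _

lemma margX0X2_nonneg (hQ : ∀ v, 0 ≤ Q v) (x0 : X0) (x2 : X2) :
    0 ≤ margX0X2 Q x0 x2 :=
  Finset.sum_nonneg fun _ _ => Finset.sum_nonneg fun _ _ => hQ _

lemma margX0X2_le_margX2 (hQ : ∀ v, 0 ≤ Q v) (x0 : X0) (x2 : X2) :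
    margX0X2 Q x0 x2 ≤ margX2 Q x2 := by
  rw [margX2_eq_sum]
  exact Finset.single_le_sum (fun x0' _ => margX0X2_nonneg Q hQ x0' x2)
    (Finset.mem_univ x0)

lemma margX0X2Y_le_margX0X2 (hQ : ∀ v, 0 ≤ Q v) (x0 : X0) (x2 : X2) (y : Y) :
    margX0X2Y Q x0 x2 y ≤ margX0X2 Q x0 x2 := by
  rw [margX0X2_eq_sum]
  exact Finset.single_le_sum (fun y' _ => margX0X2Y_nonneg Q hQ x0 x2 y')
    (Finset.mem_univ y)

lemma margX0_comb (x0 : X0) :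
    margX0 (fun v => lam * Q1 v + (1 - lam) * Q2 v) x0 =
      lam * margX0 Q1 x0 + (1 - lam) * margX0 Q2 x0 := by
  simp only [margX0, Finset.sum_add_distrib, ← Finset.mul_sum]

lemma margX2_comb (x2 : X2) :
    margX2 (fun v => lam * Q1 v + (1 - lam) * Q2 v) x2 =
      lam * margX2 Q1 x2 + (1 - lam) * margX2 Q2 x2 := by
  simp only [margX2, Finset.sum_add_distrib, ← Finset.mul_sum]

lemma margX0X2_comb (x0 : X0) (x2 : X2) :
    margX0X2 (fun v => lam * Q1 v + (1 - lam) * Q2 v) x0 x2 =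
      lam * margX0X2 Q1 x0 x2 + (1 - lam) * margX0X2 Q2 x0 x2 := by
  simp only [margX0X2, Finset.sum_add_distrib, ← Finset.mul_sum]

lemma margX0X2Y_comb (x0 : X0) (x2 : X2) (y : Y) :
    margX0X2Y (fun v => lam * Q1 v + (1 - lam) * Q2 v) x0 x2 y =
      lam * margX0X2Y Q1 x0 x2 y + (1 - lam) * margX0X2Y Q2 x0 x2 y := by
  simp only [margX0X2Y, Finset.sum_add_distrib, ← Finset.mul_sum]

lemma margX0X1X2_comb (x0 : X0) (x1 : X1) (x2 : X2) :
    margX0X1X2 (fun v => lam * Q1 v + (1 - lam) * Q2 v) x0 x1 x2 =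
      lam * margX0X1X2 Q1 x0 x1 x2 + (1 - lam) * margX0X1X2 Q2 x0 x1 x2 := by
  simp only [margX0X1X2, Finset.sum_add_distrib, ← Finset.mul_sum]

end MargAux

section PhiAux
set_option linter.unusedSectionVars false
variable {X0 X1 X2 Y : Type*} [Fintype X0] [Fintype X1] [Fintype X2] [Fintype Y]

lemma mlog_split {m m2 : ℝ} (hm : 0 ≤ m) (hle : m ≤ m2) :
    m * Real.log (m / m2) = m * Real.log m - m * Real.log m2 := by
  rcases eq_or_lt_of_le hm with h | h
  · simp [← h]
  · rw [Real.log_div (ne_of_gt h) (ne_of_gt (lt_of_lt_of_le h hle))]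
    ring

/-- Representation of `Phi` on admissible distributions. -/
lemma phi_repr (ρ : X0 → ℝ) (Γ : X1 → Y → ℝ) (Q : X0 × X1 × X2 × Y → ℝ)
    (hQ : IsAdmissible ρ Γ Q) :
    Phi Q = (-∑ x0, ρ x0 * Real.log (ρ x0))
      + (∑ x0, ∑ x2, margX0X2 Q x0 x2 *
          Real.log (margX0X2 Q x0 x2 / margX2 Q x2))
      + (∑ x0, ∑ x2, ∑ y, margX0X2Y Q x0 x2 y *
          Real.log (margX0X2Y Q x0 x2 y / margX0X2 Q x0 x2))
      - (∑ x0, ∑ x1, ∑ x2, ∑ y, Q (x0, x1, x2, y) * Real.log (Γ x1 y)) := by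
  obtain ⟨⟨hnn, _⟩, hmarg, hfac⟩ := hQ
  have h0 : H_X0 Q = -∑ x0, ρ x0 * Real.log (ρ x0) := by
    simp only [H_X0, hmarg]
  have hA : (∑ x0, ∑ x2, margX0X2 Q x0 x2 *
      Real.log (margX0X2 Q x0 x2 / margX2 Q x2)) = H_X2 Q - H_X0X2 Q := by
    have step1 : (∑ x0, ∑ x2, margX0X2 Q x0 x2 *
        Real.log (margX0X2 Q x0 x2 / margX2 Q x2)) =
        ∑ x0, ∑ x2, (margX0X2 Q x0 x2 * Real.log (margX0X2 Q x0 x2)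
          - margX0X2 Q x0 x2 * Real.log (margX2 Q x2)) := by
      refine Finset.sum_congr rfl fun x0 _ => Finset.sum_congr rfl fun x2 _ => ?_
      exact mlog_split (margX0X2_nonneg Q hnn x0 x2) (margX0X2_le_margX2 Q hnn x0 x2)
    have step2 : (∑ x0, ∑ x2, margX0X2 Q x0 x2 * Real.log (margX2 Q x2)) =
        ∑ x2, margX2 Q x2 * Real.log (margX2 Q x2) := by
      rw [Finset.sum_comm]
      refine Finset.sum_congr rfl fun x2 _ => ?_
      rw [← Finset.sum_mul, ← margX2_eq_sum]
    rw [step1]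
    simp only [Finset.sum_sub_distrib]
    rw [step2]
    simp only [H_X2, H_X0X2]
    ring
  have hL : HcondY_X0X1X2 Q =
      -∑ x0, ∑ x1, ∑ x2, ∑ y, Q (x0, x1, x2, y) * Real.log (Γ x1 y) := by
    simp only [HcondY_X0X1X2]
    congr 1
    refine Finset.sum_congr rfl fun x0 _ => Finset.sum_congr rfl fun x1 _ =>
      Finset.sum_congr rfl fun x2 _ => Finset.sum_congr rfl fun y _ => ?_
    rcases eq_or_ne (margX0X1X2 Q x0 x1 x2) 0 with h | h
    · have hz : Q (x0, x1, x2, y) = 0 := by rw [hfac, h, mul_zero]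
      simp [hz]
    · rw [hfac x0 x1 x2 y, mul_div_assoc, div_self h, mul_one]
  have hB : HcondY_X0X2 Q =
      -∑ x0, ∑ x2, ∑ y, margX0X2Y Q x0 x2 y *
        Real.log (margX0X2Y Q x0 x2 y / margX0X2 Q x0 x2) := rfl
  simp only [Phi, mutI_X0X2, condMutI_X1Y_X0X2]
  rw [h0, hL, hB]
  linear_combination -hA

end PhiAux
/-- Lemma 1: the set of `(ρ, Γ)`-admissible distributions is stable under
convex combinations, and `Φ(Q) = I_Q(X0;X2) - I_Q(X1;Y|X0,X2)` is convex on it. -/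
theorem phi_convex_on_admissible
    {X0 X1 X2 Y : Type*} [Fintype X0] [Fintype X1] [Fintype X2] [Fintype Y]
    (ρ : X0 → ℝ) (hρ : IsPmf ρ) (Γ : X1 → Y → ℝ) (hΓ : IsChannel Γ)
    (Q1 Q2 : X0 × X1 × X2 × Y → ℝ)
    (hQ1 : IsAdmissible ρ Γ Q1) (hQ2 : IsAdmissible ρ Γ Q2)
    (lam : ℝ) (hlam : lam ∈ Set.Icc (0 : ℝ) 1) :
    IsAdmissible ρ Γ (fun v => lam * Q1 v + (1 - lam) * Q2 v) ∧
    Phi (fun v => lam * Q1 v + (1 - lam) * Q2 v) ≤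
      lam * Phi Q1 + (1 - lam) * Phi Q2 := by
  obtain ⟨hl0, hl1⟩ := hlam
  have hm : (0:ℝ) ≤ 1 - lam := by linarith
  obtain ⟨⟨hnn1, hsum1⟩, hmarg1, hfac1⟩ := hQ1
  obtain ⟨⟨hnn2, hsum2⟩, hmarg2, hfac2⟩ := hQ2
  set Qc : X0 × X1 × X2 × Y → ℝ := fun v => lam * Q1 v + (1 - lam) * Q2 v with hQc
  have hnnc : ∀ v, 0 ≤ Qc v := fun v =>
    add_nonneg (mul_nonneg hl0 (hnn1 v)) (mul_nonneg hm (hnn2 v))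
  have hadm : IsAdmissible ρ Γ Qc := by
    refine ⟨⟨hnnc, ?_⟩, ?_, ?_⟩
    · simp only [hQc, Finset.sum_add_distrib, ← Finset.mul_sum, hsum1, hsum2]
      ring
    · intro x0
      rw [margX0_comb, hmarg1, hmarg2]
      ring
    · intro x0 x1 x2 y
      rw [margX0X1X2_comb]
      simp only [hQc]
      rw [hfac1, hfac2]
      ring
  refine ⟨hadm, ?_⟩
  rw [phi_repr ρ Γ Qc hadm, phi_repr ρ Γ Q1 ⟨⟨hnn1, hsum1⟩, hmarg1, hfac1⟩,
    phi_repr ρ Γ Q2 ⟨⟨hnn2, hsum2⟩, hmarg2, hfac2⟩]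
  -- the linear (channel) part is exactly linear
  have hL : (∑ x0, ∑ x1, ∑ x2, ∑ y, Qc (x0, x1, x2, y) * Real.log (Γ x1 y)) =
      lam * (∑ x0, ∑ x1, ∑ x2, ∑ y, Q1 (x0, x1, x2, y) * Real.log (Γ x1 y))
      + (1 - lam) * (∑ x0, ∑ x1, ∑ x2, ∑ y, Q2 (x0, x1, x2, y) * Real.log (Γ x1 y)) := by
    simp only [hQc, add_mul, mul_assoc, Finset.sum_add_distrib, ← Finset.mul_sum]
  -- the A part is convex
  have hA : (∑ x0, ∑ x2, margX0X2 Qc x0 x2 *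
        Real.log (margX0X2 Qc x0 x2 / margX2 Qc x2)) ≤
      lam * (∑ x0, ∑ x2, margX0X2 Q1 x0 x2 *
        Real.log (margX0X2 Q1 x0 x2 / margX2 Q1 x2))
      + (1 - lam) * (∑ x0, ∑ x2, margX0X2 Q2 x0 x2 *
        Real.log (margX0X2 Q2 x0 x2 / margX2 Q2 x2)) := by
    have step : (∑ x0, ∑ x2, margX0X2 Qc x0 x2 *
        Real.log (margX0X2 Qc x0 x2 / margX2 Qc x2)) ≤
        ∑ x0, ∑ x2, (lam * (margX0X2 Q1 x0 x2 *
            Real.log (margX0X2 Q1 x0 x2 / margX2 Q1 x2))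
          + (1 - lam) * (margX0X2 Q2 x0 x2 *
            Real.log (margX0X2 Q2 x0 x2 / margX2 Q2 x2))) := by
      refine Finset.sum_le_sum fun x0 _ => Finset.sum_le_sum fun x2 _ => ?_
      rw [hQc, margX0X2_comb, margX2_comb]
      exact key_ineq (margX0X2_nonneg Q1 hnn1 x0 x2) (margX0X2_nonneg Q2 hnn2 x0 x2)
        (margX0X2_le_margX2 Q1 hnn1 x0 x2) (margX0X2_le_margX2 Q2 hnn2 x0 x2) hl0 hl1
    calc _ ≤ _ := step
      _ = _ := by simp only [Finset.sum_add_distrib, ← Finset.mul_sum]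
  -- the B part is convex
  have hB : (∑ x0, ∑ x2, ∑ y, margX0X2Y Qc x0 x2 y *
        Real.log (margX0X2Y Qc x0 x2 y / margX0X2 Qc x0 x2)) ≤
      lam * (∑ x0, ∑ x2, ∑ y, margX0X2Y Q1 x0 x2 y *
        Real.log (margX0X2Y Q1 x0 x2 y / margX0X2 Q1 x0 x2))
      + (1 - lam) * (∑ x0, ∑ x2, ∑ y, margX0X2Y Q2 x0 x2 y *
        Real.log (margX0X2Y Q2 x0 x2 y / margX0X2 Q2 x0 x2)) := by
    have step : (∑ x0, ∑ x2, ∑ y, margX0X2Y Qc x0 x2 y *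
        Real.log (margX0X2Y Qc x0 x2 y / margX0X2 Qc x0 x2)) ≤
        ∑ x0, ∑ x2, ∑ y, (lam * (margX0X2Y Q1 x0 x2 y *
            Real.log (margX0X2Y Q1 x0 x2 y / margX0X2 Q1 x0 x2))
          + (1 - lam) * (margX0X2Y Q2 x0 x2 y *
            Real.log (margX0X2Y Q2 x0 x2 y / margX0X2 Q2 x0 x2))) := by
      refine Finset.sum_le_sum fun x0 _ => Finset.sum_le_sum fun x2 _ =>
        Finset.sum_le_sum fun y _ => ?_
      rw [hQc, margX0X2Y_comb, margX0X2_comb]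
      exact key_ineq (margX0X2Y_nonneg Q1 hnn1 x0 x2 y) (margX0X2Y_nonneg Q2 hnn2 x0 x2 y)
        (margX0X2Y_le_margX0X2 Q1 hnn1 x0 x2 y) (margX0X2Y_le_margX0X2 Q2 hnn2 x0 x2 y) hl0 hl1
    calc _ ≤ _ := step
      _ = _ := by simp only [Finset.sum_add_distrib, ← Finset.mul_sum]
  rw [hL]
  nlinarith
end

section
/- (Converse inequality for Theorem 1) Let t ≥ 1 and let (X0_i, X1_i, X2_i, Y_i) for i = 1, …, t be random variables on a probability space, each taking values in a finite set, such that: (i) X0_1, …, X0_t are mutually independent; (ii) the channel is memoryless in the sense that H(Y_1,…,Y_t | X0_1,…,X0_t, X1_1,…,X1_t, X2_1,…,X2_t) = ∑_{i=1}^t H(Y_i | X0_i, X1_i, X2_i); (iii) for every i there is a (deterministic) function f_i with X2_i = f_i(X0_1,…,X0_{i−1}, Y_1,…,Y_{i−1}, X2_1,…,X2_{i−1}) almost surely (for i = 1, X2_1 is almost surely constant). Then ∑_{i=1}^t I(X0_i ; X2_i) ≤ ∑_{i=1}^t I(X1_i ; Y_i | X0_i, X2_i). -/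
set_option linter.unusedSectionVars false
set_option linter.unusedVariables false
set_option maxHeartbeats 1000000

open scoped BigOperators
open MeasureTheory

/-- Shannon entropy (natural log) of a random variable with values in a finite set,
with the convention `0 log 0 = 0` (which holds since `Real.log 0 = 0`). -/
noncomputable def entH {Ω : Type*} [MeasurableSpace Ω] (μ : Measure Ω)
    {S : Type*} [Fintype S] (X : Ω → S) : ℝ :=
  -∑ s, (μ (X ⁻¹' {s})).toReal * Real.log ((μ (X ⁻¹' {s})).toReal)

/-- Conditional entropy `H(U | V) = H(U, V) - H(V)`. -/
noncomputable def condH {Ω : Type*} [MeasurableSpace Ω] (μ : Measure Ω)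
    {S T : Type*} [Fintype S] [Fintype T] (U : Ω → S) (V : Ω → T) : ℝ :=
  entH μ (fun ω => (U ω, V ω)) - entH μ V

/-- Mutual information `I(U ; V) = H(U) + H(V) - H(U, V)`. -/
noncomputable def mutI {Ω : Type*} [MeasurableSpace Ω] (μ : Measure Ω)
    {S T : Type*} [Fintype S] [Fintype T] (U : Ω → S) (V : Ω → T) : ℝ :=
  entH μ U + entH μ V - entH μ (fun ω => (U ω, V ω))

/-- Conditional mutual information
`I(U ; V | W) = H(U, W) + H(V, W) - H(U, V, W) - H(W)`. -/
noncomputable def condMI {Ω : Type*} [MeasurableSpace Ω] (μ : Measure Ω)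
    {S T R : Type*} [Fintype S] [Fintype T] [Fintype R]
    (U : Ω → S) (V : Ω → T) (W : Ω → R) : ℝ :=
  entH μ (fun ω => (U ω, W ω)) + entH μ (fun ω => (V ω, W ω))
    - entH μ (fun ω => (U ω, V ω, W ω)) - entH μ W

open Finset MeasureTheory
open scoped Classical

section PMF
variable {A B C : Type*} [Fintype A] [Fintype B] [Fintype C]

noncomputable def pent (p : A → ℝ) : ℝ := ∑ a, Real.negMulLog (p a)

noncomputable def pmap (φ : A → B) (p : A → ℝ) : B → ℝ :=
  fun b => ∑ a, if φ a = b then p a else 0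

lemma pmap_nonneg {p : A → ℝ} (hp : ∀ a, 0 ≤ p a) (φ : A → B) (b : B) :
    0 ≤ pmap φ p b := by
  refine Finset.sum_nonneg fun a _ => ?_
  by_cases h : φ a = b <;> simp [h, hp a]

lemma pmap_sum (φ : A → B) (p : A → ℝ) : ∑ b, pmap φ p b = ∑ a, p a := by
  unfold pmap
  rw [Finset.sum_comm]
  refine Finset.sum_congr rfl fun a _ => ?_
  simp

lemma pmap_comp (ψ : B → C) (φ : A → B) (p : A → ℝ) :
    pmap ψ (pmap φ p) = pmap (fun a => ψ (φ a)) p := by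
  funext c
  unfold pmap
  have h1 : ∀ b : B, (if ψ b = c then ∑ a, if φ a = b then p a else 0 else 0)
      = ∑ a, if ψ b = c then (if φ a = b then p a else 0) else 0 := by
    intro b; split <;> simp
  simp only [h1]
  rw [Finset.sum_comm]
  refine Finset.sum_congr rfl fun a _ => ?_
  rw [Finset.sum_eq_single (φ a)]
  · by_cases h : ψ (φ a) = c <;> simp [h]
  · intro b _ hb
    by_cases h : ψ b = c <;> simp [h, Ne.symm hb]
  · simp

lemma pmap_apply_eq_sum_filter (φ : A → B) (p : A → ℝ) (b : B) :
    pmap φ p b = ∑ a ∈ univ.filter (fun a => φ a = b), p a := by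
  unfold pmap
  rw [Finset.sum_filter]

lemma pmap_eq_zero_of_not_mem_image (φ : A → B) (p : A → ℝ) {b : B}
    (hb : b ∉ univ.image φ) : pmap φ p b = 0 := by
  rw [pmap_apply_eq_sum_filter]
  refine Finset.sum_eq_zero fun a ha => ?_
  exact absurd (Finset.mem_image.2 ⟨a, Finset.mem_univ a, (Finset.mem_filter.1 ha).2⟩) hb

lemma pent_congr {p : A → ℝ} (φ : A → B) (φ' : A → C)
    (h : ∀ x y, φ x = φ y ↔ φ' x = φ' y) :
    pent (pmap φ p) = pent (pmap φ' p) := by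
  unfold pent
  have hzB : ∑ d : B, Real.negMulLog (pmap φ p d)
      = ∑ d ∈ univ.image φ, Real.negMulLog (pmap φ p d) := by
    refine (Finset.sum_subset (Finset.subset_univ _) fun d _ hd => ?_).symm
    rw [pmap_eq_zero_of_not_mem_image φ p hd, Real.negMulLog_zero]
  have hzC : ∑ d : C, Real.negMulLog (pmap φ' p d)
      = ∑ d ∈ univ.image φ', Real.negMulLog (pmap φ' p d) := by
    refine (Finset.sum_subset (Finset.subset_univ _) fun d _ hd => ?_).symm
    rw [pmap_eq_zero_of_not_mem_image φ' p hd, Real.negMulLog_zero]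
  rw [hzB, hzC]
  have key : ∀ (b : B) (hb : b ∈ univ.image φ),
      ∃ a : A, φ a = b := by
    intro b hb
    obtain ⟨a, _, ha⟩ := Finset.mem_image.1 hb
    exact ⟨a, ha⟩
  refine Finset.sum_bij (fun b hb => φ' (Classical.choose (key b hb))) ?_ ?_ ?_ ?_
  · intro b hb
    exact Finset.mem_image.2 ⟨_, Finset.mem_univ _, rfl⟩
  · intro b1 hb1 b2 hb2 heq
    have h1 := Classical.choose_spec (key b1 hb1)
    have h2 := Classical.choose_spec (key b2 hb2)
    rw [← h1, ← h2]
    exact (h _ _).2 heq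
  · intro c hc
    obtain ⟨a, _, ha⟩ := Finset.mem_image.1 hc
    refine ⟨φ a, Finset.mem_image.2 ⟨a, Finset.mem_univ a, rfl⟩, ?_⟩
    have hspec := Classical.choose_spec (key (φ a) (Finset.mem_image.2 ⟨a, Finset.mem_univ a, rfl⟩))
    rw [← ha]
    exact (h _ _).1 hspec
  · intro b hb
    congr 1
    have hspec := Classical.choose_spec (key b hb)
    set a0 := Classical.choose (key b hb)
    rw [pmap_apply_eq_sum_filter, pmap_apply_eq_sum_filter]
    refine Finset.sum_congr ?_ (fun _ _ => rfl)
    ext a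
    simp only [Finset.mem_filter, Finset.mem_univ, true_and]
    constructor
    · intro hx; exact (h a a0).1 (hx.trans hspec.symm)
    · intro hx; exact ((h a a0).2 hx).trans hspec

end PMF

section Core
variable {U V W : Type*} [Fintype U] [Fintype V] [Fintype W]

lemma pmap_proj_uw (q : U × V × W → ℝ) (u : U) (w : W) :
    pmap (fun x => (x.1, x.2.2)) q (u, w) = ∑ v, q (u, v, w) := by
  unfold pmap
  rw [Fintype.sum_prod_type]
  rw [Finset.sum_eq_single u]
  · simp only [Fintype.sum_prod_type]
    refine Finset.sum_congr rfl fun v _ => ?_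
    rw [Finset.sum_eq_single w] <;> simp +contextual [Prod.ext_iff]
  · intro u' _ hu; apply Finset.sum_eq_zero; intro x _
    simp [Prod.ext_iff, hu]
  · simp

lemma pmap_proj_vw (q : U × V × W → ℝ) (v : V) (w : W) :
    pmap (fun x => (x.2.1, x.2.2)) q (v, w) = ∑ u, q (u, v, w) := by
  unfold pmap
  rw [Fintype.sum_prod_type]
  refine Finset.sum_congr rfl fun u _ => ?_
  rw [Fintype.sum_prod_type]
  rw [Finset.sum_eq_single v]
  · rw [Finset.sum_eq_single w] <;> simp +contextual [Prod.ext_iff]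
  · intro v' _ hv; apply Finset.sum_eq_zero; intro x _
    simp [Prod.ext_iff, hv]
  · simp

lemma pmap_proj_w (q : U × V × W → ℝ) (w : W) :
    pmap (fun x => x.2.2) q w = ∑ u, ∑ v, q (u, v, w) := by
  unfold pmap
  rw [Fintype.sum_prod_type]
  refine Finset.sum_congr rfl fun u _ => ?_
  rw [Fintype.sum_prod_type]
  refine Finset.sum_congr rfl fun v _ => ?_
  rw [Finset.sum_eq_single w] <;> simp +contextual

end Core

lemma sum_pmap_mul {A B : Type*} [Fintype A] [Fintype B] (φ : A → B) (q : A → ℝ) (g : B → ℝ) :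
    ∑ b, pmap φ q b * g b = ∑ a, q a * g (φ a) := by
  unfold pmap
  have h1 : ∀ b : B, (∑ a, if φ a = b then q a else 0) * g b
      = ∑ a, if φ a = b then q a * g (φ a) else 0 := by
    intro b
    rw [Finset.sum_mul]
    refine Finset.sum_congr rfl fun a _ => ?_
    by_cases h : φ a = b <;> simp [h]
  simp only [h1]
  rw [Finset.sum_comm]
  refine Finset.sum_congr rfl fun a _ => ?_
  simp

lemma pent_pmap_eq_sum {A B : Type*} [Fintype A] [Fintype B] (φ : A → B) (q : A → ℝ) :
    pent (pmap φ q) = -∑ a, q a * Real.log (pmap φ q (φ a)) := by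
  unfold pent
  have : ∀ b, Real.negMulLog (pmap φ q b) = -(pmap φ q b * Real.log (pmap φ q b)) := by
    intro b; simp [Real.negMulLog, neg_mul]
  simp only [this]
  rw [Finset.sum_neg_distrib]
  exact congrArg Neg.neg (sum_pmap_mul φ q (fun b => Real.log (pmap φ q b)))

lemma pent_eq_sum {A : Type*} [Fintype A] (q : A → ℝ) :
    pent q = -∑ a, q a * Real.log (q a) := by
  unfold pent
  rw [← Finset.sum_neg_distrib]
  refine Finset.sum_congr rfl fun a _ => ?_
  simp [Real.negMulLog, neg_mul]


section CoreIneq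
variable {U V W : Type*} [Fintype U] [Fintype V] [Fintype W]

lemma pent_core (q : U × V × W → ℝ) (hq : ∀ x, 0 ≤ q x) (hs : ∑ x, q x = 1) :
    pent q + pent (pmap (fun x => x.2.2) q)
      ≤ pent (pmap (fun x => (x.1, x.2.2)) q) + pent (pmap (fun x => (x.2.1, x.2.2)) q) := by
  set mUW : U × V × W → ℝ := fun a => pmap (fun x => (x.1, x.2.2)) q (a.1, a.2.2) with hmUW
  set mVW : U × V × W → ℝ := fun a => pmap (fun x => (x.2.1, x.2.2)) q (a.2.1, a.2.2) with hmVW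
  set mW : U × V × W → ℝ := fun a => pmap (fun x => x.2.2) q a.2.2 with hmW
  -- rewrite all pents as sums over A
  have e0 : pent q = -∑ a, q a * Real.log (q a) := pent_eq_sum q
  have eUW : pent (pmap (fun x => (x.1, x.2.2)) q) = -∑ a, q a * Real.log (mUW a) :=
    pent_pmap_eq_sum _ q
  have eVW : pent (pmap (fun x => (x.2.1, x.2.2)) q) = -∑ a, q a * Real.log (mVW a) :=
    pent_pmap_eq_sum _ q
  have eW : pent (pmap (fun x => x.2.2) q) = -∑ a, q a * Real.log (mW a) :=
    pent_pmap_eq_sum _ q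
  rw [e0, eUW, eVW, eW]
  rw [← sub_nonneg]
  have : (-∑ a, q a * Real.log (mUW a)) + (-∑ a, q a * Real.log (mVW a))
      - ((-∑ a, q a * Real.log (q a)) + (-∑ a, q a * Real.log (mW a)))
      = ∑ a, q a * (Real.log (q a) + Real.log (mW a) - Real.log (mUW a) - Real.log (mVW a)) := by
    rw [Finset.sum_congr rfl (fun a _ => by ring :
      ∀ a ∈ Finset.univ, q a * (Real.log (q a) + Real.log (mW a) - Real.log (mUW a) - Real.log (mVW a))
        = q a * Real.log (q a) + q a * Real.log (mW a) - q a * Real.log (mUW a) - q a * Real.log (mVW a))]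
    rw [Finset.sum_sub_distrib, Finset.sum_sub_distrib, Finset.sum_add_distrib]
    ring
  rw [this]
  -- facts about marginals
  have hq_le_mUW : ∀ a, q a ≤ mUW a := by
    intro ⟨u, v, w⟩
    rw [hmUW]; simp only [pmap_proj_uw]
    exact Finset.single_le_sum (fun v' _ => hq (u, v', w)) (Finset.mem_univ v)
  have hq_le_mVW : ∀ a, q a ≤ mVW a := by
    intro ⟨u, v, w⟩
    rw [hmVW]; simp only [pmap_proj_vw]
    exact Finset.single_le_sum (fun u' _ => hq (u', v, w)) (Finset.mem_univ u)
  have hmUW_le_mW : ∀ a, mUW a ≤ mW a := by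
    intro ⟨u, v, w⟩
    rw [hmUW, hmW]; simp only [pmap_proj_uw, pmap_proj_w]
    exact Finset.single_le_sum (f := fun u' => ∑ v', q (u', v', w))
      (fun u' _ => Finset.sum_nonneg fun v' _ => hq _) (Finset.mem_univ u)
  have hmUW_nonneg : ∀ a, 0 ≤ mUW a := fun a => le_trans (hq a) (hq_le_mUW a)
  have hmVW_nonneg : ∀ a, 0 ≤ mVW a := fun a => le_trans (hq a) (hq_le_mVW a)
  -- support set
  set S : Finset (U × V × W) := Finset.univ.filter (fun a => 0 < q a) with hS
  have hsum_eq : ∑ a, q a * (Real.log (q a) + Real.log (mW a) - Real.log (mUW a) - Real.log (mVW a))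
      = ∑ a ∈ S, q a * (Real.log (q a) + Real.log (mW a) - Real.log (mUW a) - Real.log (mVW a)) := by
    refine (Finset.sum_subset (Finset.filter_subset _ _) fun a _ ha => ?_).symm
    have : q a = 0 := by
      rcases lt_or_eq_of_le (hq a) with h | h
      · exact absurd (Finset.mem_filter.2 ⟨Finset.mem_univ a, h⟩) ha
      · exact h.symm
    rw [this, zero_mul]
  rw [hsum_eq]
  -- termwise lower bound on S
  have key : ∀ a ∈ S, q a - mUW a * mVW a / mW a
      ≤ q a * (Real.log (q a) + Real.log (mW a) - Real.log (mUW a) - Real.log (mVW a)) := by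
    intro a ha
    have hqa : 0 < q a := (Finset.mem_filter.1 ha).2
    have hUW : 0 < mUW a := lt_of_lt_of_le hqa (hq_le_mUW a)
    have hVW : 0 < mVW a := lt_of_lt_of_le hqa (hq_le_mVW a)
    have hW : 0 < mW a := lt_of_lt_of_le hUW (hmUW_le_mW a)
    set R : ℝ := mUW a * mVW a / (q a * mW a) with hR
    have hRpos : 0 < R := by positivity
    have hlog : Real.log R ≤ R - 1 := Real.log_le_sub_one_of_pos hRpos
    have hexp : Real.log (q a) + Real.log (mW a) - Real.log (mUW a) - Real.log (mVW a)
        = -Real.log R := by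
      rw [hR, Real.log_div (by positivity) (by positivity), Real.log_mul (ne_of_gt hUW) (ne_of_gt hVW),
        Real.log_mul (ne_of_gt hqa) (ne_of_gt hW)]
      ring
    rw [hexp]
    have h1 : q a * -Real.log R ≥ q a * (1 - R) := by
      have := mul_le_mul_of_nonneg_left hlog (le_of_lt hqa)
      nlinarith
    have h2 : q a * (1 - R) = q a - mUW a * mVW a / mW a := by
      rw [hR]
      field_simp
    linarith
  refine le_trans ?_ (Finset.sum_le_sum key)
  rw [Finset.sum_sub_distrib]
  rw [sub_nonneg]
  -- ∑_{S} mUW mVW / mW ≤ 1 = ∑_S q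
  have hsumS : ∑ a ∈ S, q a = 1 := by
    rw [← hs]
    refine Finset.sum_subset (Finset.filter_subset _ _) fun a _ ha => ?_
    rcases lt_or_eq_of_le (hq a) with h | h
    · exact absurd (Finset.mem_filter.2 ⟨Finset.mem_univ a, h⟩) ha
    · exact h.symm
  rw [hsumS]
  -- extend to T = {a | 0 < mW a.2.2}
  set T : Finset (U × V × W) := Finset.univ.filter (fun a => 0 < mW a) with hT
  have hST : S ⊆ T := by
    intro a ha
    have hqa : 0 < q a := (Finset.mem_filter.1 ha).2
    exact Finset.mem_filter.2 ⟨Finset.mem_univ a,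
      lt_of_lt_of_le hqa (le_trans (hq_le_mUW a) (hmUW_le_mW a))⟩
  have hmono : ∑ a ∈ S, mUW a * mVW a / mW a ≤ ∑ a ∈ T, mUW a * mVW a / mW a := by
    refine Finset.sum_le_sum_of_subset_of_nonneg hST fun a ha _ => ?_
    have hWpos : 0 < mW a := (Finset.mem_filter.1 ha).2
    exact div_nonneg (mul_nonneg (hmUW_nonneg a) (hmVW_nonneg a)) hWpos.le
  refine le_trans hmono ?_
  -- compute the T sum
  have hTval : ∑ a ∈ T, mUW a * mVW a / mW a
      = ∑ w, (if 0 < pmap (fun x : U × V × W => x.2.2) q w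
          then pmap (fun x : U × V × W => x.2.2) q w else 0) := by
    rw [Finset.sum_filter]
    have swap : ∑ a : U × V × W, (if 0 < mW a then mUW a * mVW a / mW a else 0)
        = ∑ w, ∑ u, ∑ v, (if 0 < pmap (fun x : U × V × W => x.2.2) q w
            then (pmap (fun x : U × V × W => (x.1, x.2.2)) q (u, w))
              * (pmap (fun x : U × V × W => (x.2.1, x.2.2)) q (v, w))
              / pmap (fun x : U × V × W => x.2.2) q w else 0) := by
      rw [Fintype.sum_prod_type]
      have inner : ∀ u : U, ∑ x : V × W, (if 0 < mW (u, x) then mUW (u, x) * mVW (u, x) / mW (u, x) else 0)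
          = ∑ w, ∑ v, (if 0 < pmap (fun x : U × V × W => x.2.2) q w
            then (pmap (fun x : U × V × W => (x.1, x.2.2)) q (u, w))
              * (pmap (fun x : U × V × W => (x.2.1, x.2.2)) q (v, w))
              / pmap (fun x : U × V × W => x.2.2) q w else 0) := by
        intro u
        rw [Fintype.sum_prod_type, Finset.sum_comm]
      simp only [inner]
      rw [Finset.sum_comm]
    rw [swap]
    refine Finset.sum_congr rfl fun w _ => ?_
    by_cases hW : 0 < pmap (fun x : U × V × W => x.2.2) q w
    · simp only [if_pos hW]
      have hCne : pmap (fun x : U × V × W => x.2.2) q w ≠ 0 := ne_of_gt hW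
      have hA : ∑ u, pmap (fun x : U × V × W => (x.1, x.2.2)) q (u, w)
          = pmap (fun x : U × V × W => x.2.2) q w := by
        rw [pmap_proj_w]
        refine Finset.sum_congr rfl fun u _ => ?_
        rw [pmap_proj_uw]
      have hB : ∑ v, pmap (fun x : U × V × W => (x.2.1, x.2.2)) q (v, w)
          = pmap (fun x : U × V × W => x.2.2) q w := by
        rw [pmap_proj_w, Finset.sum_comm]
        refine Finset.sum_congr rfl fun v _ => ?_
        rw [pmap_proj_vw]
      have expand : ∑ u, ∑ v, (pmap (fun x : U × V × W => (x.1, x.2.2)) q (u, w))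
            * (pmap (fun x : U × V × W => (x.2.1, x.2.2)) q (v, w))
            / pmap (fun x : U × V × W => x.2.2) q w
          = (∑ u, pmap (fun x : U × V × W => (x.1, x.2.2)) q (u, w))
            * (∑ v, pmap (fun x : U × V × W => (x.2.1, x.2.2)) q (v, w))
            / pmap (fun x : U × V × W => x.2.2) q w := by
        rw [Finset.sum_mul_sum, Finset.sum_div]
        refine Finset.sum_congr rfl fun u _ => ?_
        rw [Finset.sum_div]
      rw [expand, hA, hB, mul_div_assoc, div_self hCne, mul_one]
    · simp only [if_neg hW]
      apply Finset.sum_eq_zero; intro u _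
      apply Finset.sum_eq_zero; intro v _
      rfl
  rw [hTval]
  have step : ∀ w : W, (if 0 < pmap (fun x : U × V × W => x.2.2) q w
      then pmap (fun x : U × V × W => x.2.2) q w else 0)
      ≤ pmap (fun x : U × V × W => x.2.2) q w := by
    intro w
    by_cases h : 0 < pmap (fun x : U × V × W => x.2.2) q w
    · simp [h]
    · simp only [if_neg h]
      unfold pmap
      refine Finset.sum_nonneg fun a _ => ?_
      by_cases hh : a.2.2 = w <;> simp [hh, hq a]
  calc ∑ w, (if 0 < pmap (fun x : U × V × W => x.2.2) q w
        then pmap (fun x : U × V × W => x.2.2) q w else 0)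
      ≤ ∑ w, pmap (fun x : U × V × W => x.2.2) q w := Finset.sum_le_sum fun w _ => step w
    _ = 1 := by rw [pmap_sum]; exact hs

end CoreIneq

lemma pent_prod {U V : Type*} [Fintype U] [Fintype V] (pU : U → ℝ) (pV : V → ℝ)
    (h1 : ∑ u, pU u = 1) (h2 : ∑ v, pV v = 1) :
    pent (fun x : U × V => pU x.1 * pV x.2) = pent pU + pent pV := by
  unfold pent
  rw [Fintype.sum_prod_type]
  have inner : ∀ u : U, ∑ v, Real.negMulLog (pU u * pV v)
      = Real.negMulLog (pU u) + pU u * ∑ v, Real.negMulLog (pV v) := by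
    intro u
    have : ∀ v : V, Real.negMulLog (pU u * pV v)
        = pV v * Real.negMulLog (pU u) + pU u * Real.negMulLog (pV v) :=
      fun v => Real.negMulLog_mul (pU u) (pV v)
    simp only [this]
    rw [Finset.sum_add_distrib, ← Finset.sum_mul, ← Finset.mul_sum, h2, one_mul]
  simp only [inner]
  rw [Finset.sum_add_distrib, ← Finset.sum_mul, h1, one_mul]

open MeasureTheory


section Bridge
variable {Ω : Type*} [MeasurableSpace Ω] (μ : Measure Ω) [IsProbabilityMeasure μ]
variable {A : Type*} [Fintype A] (Z : Ω → A)

noncomputable def pOf : A → ℝ := fun a => (μ (Z ⁻¹' {a})).toReal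

lemma pOf_nonneg : ∀ a, 0 ≤ pOf μ Z a := fun a => ENNReal.toReal_nonneg

lemma bridge (hZ : ∀ a, MeasurableSet (Z ⁻¹' {a})) {B : Type*} [Fintype B] (φ : A → B) (b : B) :
    (μ ((fun ω => φ (Z ω)) ⁻¹' {b})).toReal = pmap φ (pOf μ Z) b := by
  classical
  have hset : (fun ω => φ (Z ω)) ⁻¹' {b}
      = ⋃ a ∈ Finset.univ.filter (fun a => φ a = b), Z ⁻¹' {a} := by
    ext ω
    simp only [Set.mem_preimage, Set.mem_singleton_iff, Set.mem_iUnion, Finset.mem_filter,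
      Finset.mem_univ, true_and]
    constructor
    · intro h; exact ⟨Z ω, h, rfl⟩
    · rintro ⟨a, ha, hz⟩; rw [show Z ω = a from hz] at *; exact ha
  rw [hset, measure_biUnion_finset ?_ (fun a _ => hZ a)]
  · rw [ENNReal.toReal_sum (fun a _ => measure_ne_top μ _)]
    rw [pmap_apply_eq_sum_filter]
    rfl
  · intro a1 h1 a2 h2 hne
    apply Set.disjoint_left.2
    intro ω hω1 hω2
    simp only [Set.mem_preimage, Set.mem_singleton_iff] at hω1 hω2
    exact hne (hω1 ▸ hω2 ▸ rfl)

lemma entH_eq_pent (hZ : ∀ a, MeasurableSet (Z ⁻¹' {a})) {B : Type*} [Fintype B] (φ : A → B) :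
    entH μ (fun ω => φ (Z ω)) = pent (pmap φ (pOf μ Z)) := by
  unfold entH pent
  rw [← Finset.sum_neg_distrib]
  refine Finset.sum_congr rfl fun b _ => ?_
  rw [bridge μ Z hZ φ b]
  simp [Real.negMulLog, neg_mul]

lemma pOf_sum (hZ : ∀ a, MeasurableSet (Z ⁻¹' {a})) : ∑ a, pOf μ Z a = 1 := by
  have h := bridge μ Z hZ (fun _ => ()) ()
  have hset : ((fun ω => ()) ⁻¹' {()} : Set Ω) = Set.univ := by
    ext ω; simp
  rw [hset] at h
  simp only [measure_univ, ENNReal.toReal_one] at h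
  calc ∑ a, pOf μ Z a = ∑ b : Unit, pmap (fun _ : A => ()) (pOf μ Z) b :=
        (pmap_sum (fun _ : A => ()) (pOf μ Z)).symm
    _ = pmap (fun _ : A => ()) (pOf μ Z) () := by simp
    _ = 1 := h.symm

lemma entH_congr_ae {S : Type*} [Fintype S] {U V : Ω → S} (h : U =ᵐ[μ] V) :
    entH μ U = entH μ V := by
  unfold entH
  congr 1
  refine Finset.sum_congr rfl fun s _ => ?_
  have : μ (U ⁻¹' {s}) = μ (V ⁻¹' {s}) := by
    apply measure_congr
    filter_upwards [h] with ω hω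
    show (U ω ∈ ({s} : Set S)) = (V ω ∈ ({s} : Set S))
    rw [hω]
  rw [this]

end Bridge

lemma indep_biInter {Ω : Type*} [MeasurableSpace Ω] (μ : Measure Ω) [IsProbabilityMeasure μ]
    {t : ℕ} {S0 : Fin t → Type*} [∀ i, Fintype (S0 i)]
    (X0 : (i : Fin t) → Ω → S0 i) (hm0 : ∀ i s, MeasurableSet (X0 i ⁻¹' {s}))
    (hindep : ∀ s : (i : Fin t) → S0 i,
      μ (⋂ i, X0 i ⁻¹' {s i}) = ∏ i, μ (X0 i ⁻¹' {s i}))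
    (K : Finset (Fin t)) (s : ∀ j, S0 j) :
    μ (⋂ j ∈ K, X0 j ⁻¹' {s j}) = ∏ j ∈ K, μ (X0 j ⁻¹' {s j}) := by
  classical
  -- downward induction on the complement
  suffices h : ∀ (F : Finset (Fin t)) (s : ∀ j, S0 j),
      μ (⋂ j ∈ Fᶜ, X0 j ⁻¹' {s j}) = ∏ j ∈ Fᶜ, μ (X0 j ⁻¹' {s j}) by
    have := h Kᶜ s
    rwa [compl_compl] at this
  intro F
  induction F using Finset.induction with
  | empty =>
    intro s
    rw [Finset.compl_empty]
    have h1 : (⋂ j ∈ (Finset.univ : Finset (Fin t)), X0 j ⁻¹' {s j}) = ⋂ j, X0 j ⁻¹' {s j} := by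
      ext ω; simp
    rw [h1, hindep s]
  | @insert a F haF ih =>
    intro s
    rw [Finset.compl_insert]
    have ha : a ∈ Fᶜ := Finset.mem_compl.2 haF
    have hdec : (⋂ j ∈ Fᶜ.erase a, X0 j ⁻¹' {s j})
        = ⋃ v : S0 a, ⋂ j ∈ Fᶜ, X0 j ⁻¹' {Function.update s a v j} := by
      ext ω
      simp only [Set.mem_iInter, Set.mem_iUnion, Set.mem_preimage, Set.mem_singleton_iff]
      constructor
      · intro h
        refine ⟨X0 a ω, fun j hj => ?_⟩
        by_cases hja : j = a
        · subst hja; rw [Function.update_self]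
        · rw [Function.update_of_ne hja]
          exact h j (Finset.mem_erase.2 ⟨hja, hj⟩)
      · rintro ⟨v, hv⟩ j hj
        have := hv j (Finset.mem_of_mem_erase hj)
        rwa [Function.update_of_ne (Finset.ne_of_mem_erase hj)] at this
    have hmeas : ∀ v : S0 a, MeasurableSet (⋂ j ∈ Fᶜ, X0 j ⁻¹' {Function.update s a v j}) := by
      intro v
      exact Set.Finite.measurableSet_biInter (Finset.finite_toSet _) (fun j _ => hm0 j _)
    have hdisj : Pairwise (Function.onFun Disjoint
        (fun v : S0 a => ⋂ j ∈ Fᶜ, X0 j ⁻¹' {Function.update s a v j})) := by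
      intro v v' hvv
      apply Set.disjoint_left.2
      intro ω h1 h2
      simp only [Set.mem_iInter, Set.mem_preimage, Set.mem_singleton_iff] at h1 h2
      have e1 := h1 a ha
      have e2 := h2 a ha
      rw [Function.update_self] at e1 e2
      exact hvv (e1 ▸ e2 ▸ rfl)
    rw [hdec, measure_iUnion hdisj hmeas, tsum_fintype]
    have hval : ∀ v, μ (⋂ j ∈ Fᶜ, X0 j ⁻¹' {Function.update s a v j})
        = μ (X0 a ⁻¹' {v}) * ∏ j ∈ Fᶜ.erase a, μ (X0 j ⁻¹' {s j}) := by
      intro v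
      rw [ih (Function.update s a v)]
      rw [← Finset.mul_prod_erase _ _ ha, Function.update_self]
      congr 1
      refine Finset.prod_congr rfl fun j hj => ?_
      rw [Function.update_of_ne (Finset.ne_of_mem_erase hj)]
    simp only [hval]
    rw [← Finset.sum_mul]
    have hsum1 : ∑ v, μ (X0 a ⁻¹' {v}) = 1 := by
      have huniv : (Set.univ : Set Ω) = ⋃ v : S0 a, X0 a ⁻¹' {v} := by
        ext ω; simp
      have hd : Pairwise (Function.onFun Disjoint (fun v : S0 a => X0 a ⁻¹' {v})) := by
        intro v v' hvv
        apply Set.disjoint_left.2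
        intro ω h1 h2
        simp only [Set.mem_preimage, Set.mem_singleton_iff] at h1 h2
        exact hvv (h1 ▸ h2 ▸ rfl)
      have := measure_iUnion (μ := μ) hd (fun v => hm0 a v)
      rw [← huniv, measure_univ, tsum_fintype] at this
      exact this.symm
    rw [hsum1, one_mul]

lemma indep_insert' {Ω : Type*} [MeasurableSpace Ω] (μ : Measure Ω) [IsProbabilityMeasure μ]
    {t : ℕ} {S0 : Fin t → Type*} [∀ i, Fintype (S0 i)]
    (X0 : (i : Fin t) → Ω → S0 i) (hm0 : ∀ i s, MeasurableSet (X0 i ⁻¹' {s}))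
    (hindep : ∀ s : (i : Fin t) → S0 i,
      μ (⋂ i, X0 i ⁻¹' {s i}) = ∏ i, μ (X0 i ⁻¹' {s i}))
    (i : Fin t) (K : Finset (Fin t)) (hiK : i ∉ K) (u : S0 i) (s : ∀ j, S0 j) :
    μ (X0 i ⁻¹' {u} ∩ ⋂ j ∈ K, X0 j ⁻¹' {s j})
      = μ (X0 i ⁻¹' {u}) * μ (⋂ j ∈ K, X0 j ⁻¹' {s j}) := by
  classical
  set s' := Function.update s i u with hs'
  have h1 : (X0 i ⁻¹' {u} ∩ ⋂ j ∈ K, X0 j ⁻¹' {s j})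
      = ⋂ j ∈ insert i K, X0 j ⁻¹' {s' j} := by
    rw [Finset.set_biInter_insert]
    congr 1
    · rw [hs', Function.update_self]
    · ext ω
      simp only [Set.mem_iInter, Set.mem_preimage, Set.mem_singleton_iff]
      constructor
      · intro h j hj
        rw [hs', Function.update_of_ne (by rintro rfl; exact hiK hj)]
        exact h j hj
      · intro h j hj
        have := h j hj
        rwa [hs', Function.update_of_ne (by rintro rfl; exact hiK hj)] at this
  rw [h1, indep_biInter μ X0 hm0 hindep, Finset.prod_insert hiK,
    indep_biInter μ X0 hm0 hindep]
  congr 1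
  · rw [hs', Function.update_self]
  · refine Finset.prod_congr rfl fun j hj => ?_
    rw [hs', Function.update_of_ne (by rintro rfl; exact hiK hj)]


noncomputable def pEnt {A B : Type*} [Fintype A] [Fintype B] (p : A → ℝ) (φ : A → B) : ℝ :=
  pent (pmap φ p)

lemma pEnt_congr {A B C : Type*} [Fintype A] [Fintype B] [Fintype C] (p : A → ℝ)
    (φ : A → B) (φ' : A → C) (h : ∀ x y, φ x = φ y ↔ φ' x = φ' y) :
    pEnt p φ = pEnt p φ' := pent_congr φ φ' h

lemma pEnt_core {A U V W : Type*} [Fintype A] [Fintype U] [Fintype V] [Fintype W]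
    {p : A → ℝ} (hp : ∀ a, 0 ≤ p a) (hs : ∑ a, p a = 1)
    (φU : A → U) (φV : A → V) (φW : A → W) :
    pEnt p (fun a => (φU a, φV a, φW a)) + pEnt p φW
      ≤ pEnt p (fun a => (φU a, φW a)) + pEnt p (fun a => (φV a, φW a)) := by
  have h := pent_core (pmap (fun a => (φU a, φV a, φW a)) p)
    (fun x => pmap_nonneg hp _ x) (by rw [pmap_sum]; exact hs)
  rw [pmap_comp, pmap_comp, pmap_comp] at h
  exact h

lemma pEnt_cond_reduce {A Y' W' W'' : Type*} [Fintype A] [Fintype Y'] [Fintype W'] [Fintype W'']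
    {p : A → ℝ} (hp : ∀ a, 0 ≤ p a) (hs : ∑ a, p a = 1)
    (φY : A → Y') (φW : A → W') (g : W' → W'') :
    pEnt p (fun a => (φY a, φW a)) - pEnt p φW
      ≤ pEnt p (fun a => (φY a, g (φW a))) - pEnt p (fun a => g (φW a)) := by
  have h1 := pEnt_core hp hs φY φW (fun a => g (φW a))
  have e1 : pEnt p (fun a => (φY a, φW a, g (φW a))) = pEnt p (fun a => (φY a, φW a)) := by
    refine pEnt_congr p _ _ fun x y => ?_
    simp only [Prod.mk.injEq]
    constructor
    · rintro ⟨h1, h2, h3⟩; exact ⟨h1, h2⟩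
    · rintro ⟨h1, h2⟩; exact ⟨h1, h2, congrArg g h2⟩
  have e2 : pEnt p (fun a => (φW a, g (φW a))) = pEnt p φW := by
    refine pEnt_congr p _ _ fun x y => ?_
    simp only [Prod.mk.injEq]
    constructor
    · rintro ⟨h1, h2⟩; exact h1
    · intro h1; exact ⟨h1, congrArg g h1⟩
  linarith


/-- converse inequality for Theorem 1: if (i) `X0_1, …, X0_t` are mutually
independent, (ii) the channel is memoryless in the sense that
`H(Y^t | X0^t, X1^t, X2^t) = ∑ᵢ H(Y_i | X0_i, X1_i, X2_i)`, and (iii) each `X2_i` is a.s.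
a deterministic function of the strict past `(X0_j, Y_j, X2_j)_{j < i}` (so `X2_1` is
a.s. constant), then `∑ᵢ I(X0_i ; X2_i) ≤ ∑ᵢ I(X1_i ; Y_i | X0_i, X2_i)`. -/
theorem converse_information_constraint
    {Ω : Type*} [MeasurableSpace Ω] (μ : Measure Ω) [IsProbabilityMeasure μ]
    (t : ℕ) (ht : 1 ≤ t)
    (S0 S1 S2 SY : Fin t → Type*)
    [∀ i, Fintype (S0 i)] [∀ i, Fintype (S1 i)] [∀ i, Fintype (S2 i)] [∀ i, Fintype (SY i)]
    (X0 : (i : Fin t) → Ω → S0 i) (X1 : (i : Fin t) → Ω → S1 i)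
    (X2 : (i : Fin t) → Ω → S2 i) (Y : (i : Fin t) → Ω → SY i)
    (hm0 : ∀ i s, MeasurableSet (X0 i ⁻¹' {s}))
    (hm1 : ∀ i s, MeasurableSet (X1 i ⁻¹' {s}))
    (hm2 : ∀ i s, MeasurableSet (X2 i ⁻¹' {s}))
    (hmY : ∀ i s, MeasurableSet (Y i ⁻¹' {s}))
    (hindep : ∀ s : (i : Fin t) → S0 i,
      μ (⋂ i, X0 i ⁻¹' {s i}) = ∏ i, μ (X0 i ⁻¹' {s i}))
    (hmemoryless : condH μ (fun ω => fun i => Y i ω)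
        (fun ω => ((fun i => X0 i ω), (fun i => X1 i ω), (fun i => X2 i ω))) =
      ∑ i, condH μ (Y i) (fun ω => (X0 i ω, X1 i ω, X2 i ω)))
    (hdet : ∀ i, ∃ f : ((j : Fin t) → S0 j) → ((j : Fin t) → SY j) →
        ((j : Fin t) → S2 j) → S2 i,
      (∀ a a' b b' c c', (∀ j, j < i → a j = a' j) → (∀ j, j < i → b j = b' j) →
        (∀ j, j < i → c j = c' j) → f a b c = f a' b' c') ∧
      (∀ᵐ ω ∂μ, X2 i ω = f (fun j => X0 j ω) (fun j => Y j ω) (fun j => X2 j ω))) :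
    ∑ i, mutI μ (X0 i) (X2 i) ≤
      ∑ i, condMI μ (X1 i) (Y i) (fun ω => (X0 i ω, X2 i ω)) := by
  classical
  have hne : Nonempty Ω := by
    by_contra h
    rw [not_nonempty_iff] at h
    have h1 : μ Set.univ = 1 := measure_univ
    rw [Set.univ_eq_empty_iff.2 h] at h1
    simp at h1
  obtain ⟨ω₀⟩ := hne
  choose f hfdep hfae using hdet
  have hGex : ∀ n : ℕ, ∃ G : (j : Fin t) → ((∀ j', S0 j') → (∀ j', SY j') → S2 j),
      ∀ j : Fin t, (j : ℕ) < n →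
        ((∀ a a' b b', (∀ j', j' < j → a j' = a' j') → (∀ j', j' < j → b j' = b' j') →
            G j a b = G j a' b')
          ∧ (∀ᵐ ω ∂μ, X2 j ω = G j (fun j' => X0 j' ω) (fun j' => Y j' ω))) := by
    intro n
    induction n with
    | zero => exact ⟨fun j _ _ => X2 j ω₀, fun j hj => absurd hj (Nat.not_lt_zero _)⟩
    | succ n ihn =>
      obtain ⟨G, hGn⟩ := ihn
      refine ⟨fun j => if hj : (j : ℕ) = n
          then (fun a b => f j a b (fun j' => if h' : j' < j then G j' a b else X2 j' ω₀))
          else G j, ?_⟩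
      intro j hj
      by_cases hjn : (j : ℕ) = n
      · simp only [dif_pos hjn]
        constructor
        · intro a a' b b' haa hbb
          refine hfdep j a a' b b' _ _ haa hbb ?_
          intro j' hj'
          rw [dif_pos hj', dif_pos hj']
          exact (hGn j' (by rw [← hjn]; exact hj')).1 a a' b b'
            (fun m hm => haa m (lt_trans hm hj')) (fun m hm => hbb m (lt_trans hm hj'))
        · have hprev : ∀ᵐ ω ∂μ, ∀ j' : Fin t, j' < j →
              X2 j' ω = G j' (fun m => X0 m ω) (fun m => Y m ω) := by
            rw [MeasureTheory.ae_all_iff]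
            intro j'
            by_cases hj' : j' < j
            · filter_upwards [(hGn j' (by rw [← hjn]; exact hj')).2] with ω h
              intro _; exact h
            · filter_upwards with ω; intro h; exact absurd h hj'
          filter_upwards [hfae j, hprev] with ω h1 h2
          rw [h1]
          refine hfdep j _ _ _ _ _ _ (fun _ _ => rfl) (fun _ _ => rfl) ?_
          intro j' hj'
          rw [dif_pos hj']
          exact h2 j' hj'
      · simp only [dif_neg hjn]
        exact hGn j (by omega)
  obtain ⟨G, hGall⟩ := hGex t
  have hGdep := fun j => (hGall j j.isLt).1
  have hGae := fun j => (hGall j j.isLt).2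
  -- the master random variable
  set Z : Ω → ((∀ j, S0 j) × (∀ j, S1 j) × (∀ j, S2 j) × (∀ j, SY j)) :=
    fun ω => (fun j => X0 j ω, fun j => X1 j ω, fun j => X2 j ω, fun j => Y j ω) with hZdef
  have hZ : ∀ a, MeasurableSet (Z ⁻¹' {a}) := by
    intro a
    have hset : Z ⁻¹' {a} = ((⋂ j, X0 j ⁻¹' {a.1 j}) ∩ (⋂ j, X1 j ⁻¹' {a.2.1 j})) ∩
        ((⋂ j, X2 j ⁻¹' {a.2.2.1 j}) ∩ (⋂ j, Y j ⁻¹' {a.2.2.2 j})) := by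
      ext ω
      constructor
      · intro hω
        have hz : Z ω = a := hω
        have h1 : (fun j => X0 j ω) = a.1 := congrArg Prod.fst hz
        have h2 : (fun j => X1 j ω) = a.2.1 := congrArg (fun x => x.2.1) hz
        have h3 : (fun j => X2 j ω) = a.2.2.1 := congrArg (fun x => x.2.2.1) hz
        have h4 : (fun j => Y j ω) = a.2.2.2 := congrArg (fun x => x.2.2.2) hz
        refine ⟨⟨Set.mem_iInter.2 fun j => ?_, Set.mem_iInter.2 fun j => ?_⟩,
          Set.mem_iInter.2 fun j => ?_, Set.mem_iInter.2 fun j => ?_⟩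
        · exact congrFun h1 j
        · exact congrFun h2 j
        · exact congrFun h3 j
        · exact congrFun h4 j
      · rintro ⟨⟨hA, hB⟩, hC, hD⟩
        show Z ω = a
        have h1 : (fun j => X0 j ω) = a.1 := funext fun j => Set.mem_iInter.1 hA j
        have h2 : (fun j => X1 j ω) = a.2.1 := funext fun j => Set.mem_iInter.1 hB j
        have h3 : (fun j => X2 j ω) = a.2.2.1 := funext fun j => Set.mem_iInter.1 hC j
        have h4 : (fun j => Y j ω) = a.2.2.2 := funext fun j => Set.mem_iInter.1 hD j
        calc Z ω = (a.1, a.2.1, a.2.2.1, a.2.2.2) := by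
              rw [hZdef]; exact congrArg₂ Prod.mk h1 (congrArg₂ Prod.mk h2 (congrArg₂ Prod.mk h3 h4))
          _ = a := by simp
    rw [hset]
    exact ((MeasurableSet.iInter (fun j => hm0 j _)).inter
        (MeasurableSet.iInter (fun j => hm1 j _))).inter
      ((MeasurableSet.iInter (fun j => hm2 j _)).inter
        (MeasurableSet.iInter (fun j => hmY j _)))
  set p : ((∀ j, S0 j) × (∀ j, S1 j) × (∀ j, S2 j) × (∀ j, SY j)) → ℝ := pOf μ Z with hpdef
  have hp0 : ∀ a, 0 ≤ p a := pOf_nonneg μ Z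
  have hp1 : ∑ a, p a = 1 := pOf_sum μ Z hZ
  set d0 : ∀ j, S0 j := fun j => X0 j ω₀ with hd0
  set dY : ∀ j, SY j := fun j => Y j ω₀ with hdY
  set T0 : ℕ → (∀ j, S0 j) → (∀ j, S0 j) := fun k x j => if (j : ℕ) < k then x j else d0 j with hT0
  set TY : ℕ → (∀ j, SY j) → (∀ j, SY j) := fun k y j => if (j : ℕ) < k then y j else dY j with hTY
  have hT0iff : ∀ (k : ℕ) (x y : ∀ j, S0 j), T0 k x = T0 k y ↔ ∀ j : Fin t, (j : ℕ) < k → x j = y j := by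
    intro k x y
    rw [funext_iff]
    constructor
    · intro h j hj
      have := h j
      simp only [hT0] at this
      rwa [if_pos hj, if_pos hj] at this
    · intro h j
      simp only [hT0]
      by_cases hj : (j : ℕ) < k
      · rw [if_pos hj, if_pos hj]; exact h j hj
      · rw [if_neg hj, if_neg hj]
  have hTYiff : ∀ (k : ℕ) (x y : ∀ j, SY j), TY k x = TY k y ↔ ∀ j : Fin t, (j : ℕ) < k → x j = y j := by
    intro k x y
    rw [funext_iff]
    constructor
    · intro h j hj
      have := h j
      simp only [hTY] at this
      rwa [if_pos hj, if_pos hj] at this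
    · intro h j
      simp only [hTY]
      by_cases hj : (j : ℕ) < k
      · rw [if_pos hj, if_pos hj]; exact h j hj
      · rw [if_neg hj, if_neg hj]
  set E : ℕ → ℕ → ℝ := fun k l => pEnt p (fun a => (T0 k a.1, TY l a.2.2.2)) with hE
  set Ff : ℕ → ℝ := fun l => pEnt p (fun a => (a.1, a.2.1, a.2.2.1, TY l a.2.2.2)) with hFf
  have step1 : ∀ i : Fin t, mutI μ (X0 i) (X2 i)
      ≤ E ((i : ℕ)+1) 0 - E (i : ℕ) 0 + E (i : ℕ) (i : ℕ) - E ((i : ℕ)+1) (i : ℕ) := by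
    intro i
    have hGpt : ∀ a : ((∀ j, S0 j) × (∀ j, S1 j) × (∀ j, S2 j) × (∀ j, SY j)),
        G i (T0 (i : ℕ) a.1) (TY (i : ℕ) a.2.2.2) = G i a.1 a.2.2.2 := by
      intro a
      refine hGdep i _ _ _ _ (fun j hj => ?_) (fun j hj => ?_)
      · simp only [hT0]; rw [if_pos (Fin.lt_def.mp hj)]
      · simp only [hTY]; rw [if_pos (Fin.lt_def.mp hj)]
    have haeX2 : (X2 i) =ᵐ[μ] (fun ω => G i (fun j => X0 j ω) (fun j => Y j ω)) := hGae i
    have haeP : (fun ω => ((X0 i ω, X2 i ω) : S0 i × S2 i)) =ᵐ[μ]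
        (fun ω => ((X0 i ω, G i (fun j => X0 j ω) (fun j => Y j ω)) : S0 i × S2 i)) := by
      filter_upwards [hGae i] with ω h
      rw [h]
    have bX2 : entH μ (X2 i) = pEnt p (fun a => G i a.1 a.2.2.2) := by
      rw [entH_congr_ae μ haeX2]
      exact entH_eq_pent μ Z hZ (fun a => G i a.1 a.2.2.2)
    have bX0X2 : entH μ (fun ω => ((X0 i ω, X2 i ω) : S0 i × S2 i))
        = pEnt p (fun a => ((a.1 i, G i a.1 a.2.2.2) : S0 i × S2 i)) := by
      rw [entH_congr_ae μ haeP]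
      exact entH_eq_pent μ Z hZ (fun a => ((a.1 i, G i a.1 a.2.2.2) : S0 i × S2 i))
    have bX0 : entH μ (X0 i) = pEnt p (fun a => (a.1 i : S0 i)) :=
      entH_eq_pent μ Z hZ (fun a => (a.1 i : S0 i))
    have red := pEnt_cond_reduce hp0 hp1 (fun a => (a.1 i : S0 i))
      (fun a => (T0 (i : ℕ) a.1, TY (i : ℕ) a.2.2.2))
      (fun x => (G i x.1 x.2 : S2 i))
    have red' : pEnt p (fun a => ((a.1 i : S0 i), (T0 (i : ℕ) a.1, TY (i : ℕ) a.2.2.2)))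
        - pEnt p (fun a => (T0 (i : ℕ) a.1, TY (i : ℕ) a.2.2.2))
        ≤ pEnt p (fun a => ((a.1 i, G i (T0 (i : ℕ) a.1) (TY (i : ℕ) a.2.2.2)) : S0 i × S2 i))
          - pEnt p (fun a => (G i (T0 (i : ℕ) a.1) (TY (i : ℕ) a.2.2.2) : S2 i)) := red
    have cg1 : pEnt p (fun a => ((a.1 i, G i (T0 (i : ℕ) a.1) (TY (i : ℕ) a.2.2.2)) : S0 i × S2 i))
        = pEnt p (fun a => ((a.1 i, G i a.1 a.2.2.2) : S0 i × S2 i)) :=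
      congrArg (pEnt p) (funext fun a => by rw [hGpt a])
    have cg2 : pEnt p (fun a => (G i (T0 (i : ℕ) a.1) (TY (i : ℕ) a.2.2.2) : S2 i))
        = pEnt p (fun a => (G i a.1 a.2.2.2 : S2 i)) :=
      congrArg (pEnt p) (funext fun a => by rw [hGpt a])
    have congr1 : pEnt p (fun a => ((a.1 i : S0 i), (T0 (i : ℕ) a.1, TY (i : ℕ) a.2.2.2)))
        = pEnt p (fun a => (T0 ((i : ℕ)+1) a.1, TY (i : ℕ) a.2.2.2)) := by
      refine pEnt_congr p _ _ fun x y => ?_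
      simp only [Prod.mk.injEq, hT0iff, hTYiff]
      constructor
      · rintro ⟨h1, h2, h3⟩
        refine ⟨fun j hj => ?_, h3⟩
        by_cases hjk : (j : ℕ) < (i : ℕ)
        · exact h2 j hjk
        · have hji : j = i := Fin.ext (by omega)
          rw [hji]; exact h1
      · rintro ⟨h2, h3⟩
        exact ⟨h2 i (by omega), fun j hj => h2 j (by omega), h3⟩
    have congr0a : pEnt p (fun a => (T0 (i : ℕ) a.1, TY 0 a.2.2.2))
        = pEnt p (fun a => T0 (i : ℕ) a.1) := by
      refine pEnt_congr p _ _ fun x y => ?_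
      simp only [Prod.mk.injEq]
      constructor
      · rintro ⟨h1, h2⟩; exact h1
      · intro h1
        refine ⟨h1, ?_⟩
        funext j
        simp only [hTY]
        rw [if_neg (by omega), if_neg (by omega)]
    have congr0b : pEnt p (fun a => ((a.1 i : S0 i), T0 (i : ℕ) a.1))
        = pEnt p (fun a => (T0 ((i : ℕ)+1) a.1, TY 0 a.2.2.2)) := by
      refine pEnt_congr p _ _ fun x y => ?_
      simp only [Prod.mk.injEq, hT0iff]
      constructor
      · rintro ⟨h1, h2⟩
        refine ⟨fun j hj => ?_, ?_⟩
        · by_cases hjk : (j : ℕ) < (i : ℕ)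
          · exact h2 j hjk
          · have hji : j = i := Fin.ext (by omega)
            rw [hji]; exact h1
        · funext j
          simp only [hTY]
          rw [if_neg (by omega), if_neg (by omega)]
      · rintro ⟨h2, h3⟩
        exact ⟨h2 i (by omega), fun j hj => h2 j (by omega)⟩
    -- independence: the pair (X0 i, strict past of X0) has product law
    have hfac : pmap (fun a : ((∀ j, S0 j) × (∀ j, S1 j) × (∀ j, S2 j) × (∀ j, SY j)) =>
          ((a.1 i : S0 i), T0 (i : ℕ) a.1)) p
        = fun x : S0 i × (∀ j, S0 j) =>
          (pmap (fun a : ((∀ j, S0 j) × (∀ j, S1 j) × (∀ j, S2 j) × (∀ j, SY j)) =>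
            (a.1 i : S0 i)) p x.1)
          * (pmap (fun a : ((∀ j, S0 j) × (∀ j, S1 j) × (∀ j, S2 j) × (∀ j, SY j)) =>
            T0 (i : ℕ) a.1) p x.2) := by
      funext x
      obtain ⟨u, y⟩ := x
      have B1 : (μ ((fun ω => (((Z ω).1 i : S0 i), T0 (i : ℕ) (Z ω).1)) ⁻¹' {(u, y)})).toReal
          = pmap (fun a : ((∀ j, S0 j) × (∀ j, S1 j) × (∀ j, S2 j) × (∀ j, SY j)) =>
            ((a.1 i : S0 i), T0 (i : ℕ) a.1)) p (u, y) :=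
        bridge μ Z hZ (fun a => ((a.1 i : S0 i), T0 (i : ℕ) a.1)) (u, y)
      have B2 : (μ ((fun ω => ((Z ω).1 i : S0 i)) ⁻¹' {u})).toReal
          = pmap (fun a : ((∀ j, S0 j) × (∀ j, S1 j) × (∀ j, S2 j) × (∀ j, SY j)) =>
            (a.1 i : S0 i)) p u :=
        bridge μ Z hZ (fun a => (a.1 i : S0 i)) u
      have B3 : (μ ((fun ω => T0 (i : ℕ) (Z ω).1) ⁻¹' {y})).toReal
          = pmap (fun a : ((∀ j, S0 j) × (∀ j, S1 j) × (∀ j, S2 j) × (∀ j, SY j)) =>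
            T0 (i : ℕ) a.1) p y :=
        bridge μ Z hZ (fun a => T0 (i : ℕ) a.1) y
      rw [← B1, ← B2, ← B3]
      have hB2set : ((fun ω => ((Z ω).1 i : S0 i)) ⁻¹' {u}) = X0 i ⁻¹' {u} := rfl
      by_cases hy : ∀ j : Fin t, ¬ (j : ℕ) < (i : ℕ) → y j = d0 j
      · have hset2 : (fun ω => T0 (i : ℕ) ((Z ω).1)) ⁻¹' {y}
            = ⋂ j ∈ Finset.univ.filter (fun j : Fin t => (j : ℕ) < (i : ℕ)), X0 j ⁻¹' {y j} := by
          ext ω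
          simp only [Set.mem_preimage, Set.mem_singleton_iff, Set.mem_iInter, Finset.mem_filter,
            Finset.mem_univ, true_and]
          constructor
          · intro h j hj
            have hc := congrFun h j
            simp only [hT0] at hc
            rw [if_pos hj] at hc
            exact hc
          · intro h
            funext j
            simp only [hT0]
            by_cases hj : (j : ℕ) < (i : ℕ)
            · rw [if_pos hj]; exact h j hj
            · rw [if_neg hj]; exact (hy j hj).symm
        have hset1 : (fun ω => (((Z ω).1 i : S0 i), T0 (i : ℕ) (Z ω).1)) ⁻¹' {(u, y)}
            = X0 i ⁻¹' {u} ∩ ⋂ j ∈ Finset.univ.filter (fun j : Fin t => (j : ℕ) < (i : ℕ)), X0 j ⁻¹' {y j} := by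
          ext ω
          simp only [Set.mem_preimage, Set.mem_singleton_iff, Set.mem_inter_iff, Set.mem_iInter,
            Finset.mem_filter, Finset.mem_univ, true_and, Prod.mk.injEq]
          constructor
          · rintro ⟨h1, h2⟩
            refine ⟨h1, fun j hj => ?_⟩
            have hc := congrFun h2 j
            simp only [hT0] at hc
            rw [if_pos hj] at hc
            exact hc
          · rintro ⟨h1, h2⟩
            refine ⟨h1, ?_⟩
            funext j
            simp only [hT0]
            by_cases hj : (j : ℕ) < (i : ℕ)
            · rw [if_pos hj]; exact h2 j hj
            · rw [if_neg hj]; exact (hy j hj).symm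
        have hiK : i ∉ Finset.univ.filter (fun j : Fin t => (j : ℕ) < (i : ℕ)) := by
          simp
        rw [hset1, hset2, hB2set, indep_insert' μ X0 hm0 hindep i _ hiK u y, ENNReal.toReal_mul]
      · push_neg at hy
        obtain ⟨j0, hj0, hyj0⟩ := hy
        have h1 : (fun ω => (((Z ω).1 i : S0 i), T0 (i : ℕ) (Z ω).1)) ⁻¹' {(u, y)} = ∅ := by
          ext ω
          simp only [Set.mem_preimage, Set.mem_singleton_iff, Set.mem_empty_iff_false, iff_false,
            Prod.mk.injEq, not_and]
          intro _ h2
          apply hyj0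
          have hc := congrFun h2 j0
          simp only [hT0] at hc
          rw [if_neg (not_lt.mpr hj0)] at hc
          exact hc.symm
        have h2 : (fun ω => T0 (i : ℕ) ((Z ω).1)) ⁻¹' {y} = ∅ := by
          ext ω
          simp only [Set.mem_preimage, Set.mem_singleton_iff, Set.mem_empty_iff_false, iff_false]
          intro h2
          apply hyj0
          have hc := congrFun h2 j0
          simp only [hT0] at hc
          rw [if_neg (not_lt.mpr hj0)] at hc
          exact hc.symm
        rw [h1, h2]
        simp
    have hIndAdd : pEnt p (fun a => ((a.1 i : S0 i), T0 (i : ℕ) a.1))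
        = pEnt p (fun a => (a.1 i : S0 i)) + pEnt p (fun a => T0 (i : ℕ) a.1) := by
      show pent (pmap _ p) = pent (pmap _ p) + pent (pmap _ p)
      rw [hfac]
      exact pent_prod _ _ (by rw [pmap_sum]; exact hp1) (by rw [pmap_sum]; exact hp1)
    have hmut : mutI μ (X0 i) (X2 i)
        = entH μ (X0 i) + entH μ (X2 i) - entH μ (fun ω => ((X0 i ω, X2 i ω) : S0 i × S2 i)) := rfl
    have hE1 : E ((i : ℕ)+1) 0 = pEnt p (fun a => (T0 ((i : ℕ)+1) a.1, TY 0 a.2.2.2)) := rfl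
    have hE2 : E (i : ℕ) 0 = pEnt p (fun a => (T0 (i : ℕ) a.1, TY 0 a.2.2.2)) := rfl
    have hE3 : E (i : ℕ) (i : ℕ) = pEnt p (fun a => (T0 (i : ℕ) a.1, TY (i : ℕ) a.2.2.2)) := rfl
    have hE4 : E ((i : ℕ)+1) (i : ℕ) = pEnt p (fun a => (T0 ((i : ℕ)+1) a.1, TY (i : ℕ) a.2.2.2)) := rfl
    rw [hmut, bX0, bX2, bX0X2]
    linarith [red', cg1, cg2, congr1, congr0a, congr0b, hIndAdd, hE1, hE2, hE3, hE4]
  have hle : ∀ i : Fin t, Ff ((i : ℕ)+1) - Ff (i : ℕ)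
      ≤ condH μ (Y i) (fun ω => (X0 i ω, X1 i ω, X2 i ω)) := by
    intro i
    have hred := pEnt_cond_reduce hp0 hp1 (fun a => (a.2.2.2 i : SY i))
      (fun a => (a.1, a.2.1, a.2.2.1, TY (i : ℕ) a.2.2.2))
      (fun x => ((x.1 i, x.2.1 i, x.2.2.1 i) : S0 i × S1 i × S2 i))
    have hred' : pEnt p (fun a => ((a.2.2.2 i : SY i), (a.1, a.2.1, a.2.2.1, TY (i : ℕ) a.2.2.2)))
        - pEnt p (fun a => (a.1, a.2.1, a.2.2.1, TY (i : ℕ) a.2.2.2))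
        ≤ pEnt p (fun a => ((a.2.2.2 i : SY i), ((a.1 i, a.2.1 i, a.2.2.1 i) : S0 i × S1 i × S2 i)))
          - pEnt p (fun a => ((a.1 i, a.2.1 i, a.2.2.1 i) : S0 i × S1 i × S2 i)) := hred
    have c1 : pEnt p (fun a => ((a.2.2.2 i : SY i), (a.1, a.2.1, a.2.2.1, TY (i : ℕ) a.2.2.2)))
        = pEnt p (fun a => (a.1, a.2.1, a.2.2.1, TY ((i : ℕ)+1) a.2.2.2)) := by
      refine pEnt_congr p _ _ fun x y => ?_
      simp only [Prod.mk.injEq, hTYiff]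
      constructor
      · rintro ⟨h1, h2, h3, h4, h5⟩
        refine ⟨h2, h3, h4, fun j hj => ?_⟩
        by_cases hjk : (j : ℕ) < (i : ℕ)
        · exact h5 j hjk
        · have hji : j = i := Fin.ext (by omega)
          rw [hji]; exact h1
      · rintro ⟨h2, h3, h4, h5⟩
        exact ⟨h5 i (by omega), h2, h3, h4, fun j hj => h5 j (by omega)⟩
    have b1 : entH μ (fun ω => (Y i ω, (X0 i ω, X1 i ω, X2 i ω)))
        = pEnt p (fun a => ((a.2.2.2 i : SY i), ((a.1 i, a.2.1 i, a.2.2.1 i) : S0 i × S1 i × S2 i))) :=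
      entH_eq_pent μ Z hZ (fun a => ((a.2.2.2 i : SY i), ((a.1 i, a.2.1 i, a.2.2.1 i) : S0 i × S1 i × S2 i)))
    have b2 : entH μ (fun ω => (X0 i ω, X1 i ω, X2 i ω))
        = pEnt p (fun a => ((a.1 i, a.2.1 i, a.2.2.1 i) : S0 i × S1 i × S2 i)) :=
      entH_eq_pent μ Z hZ (fun a => ((a.1 i, a.2.1 i, a.2.2.1 i) : S0 i × S1 i × S2 i))
    have eFt1 : Ff ((i : ℕ)+1)
        = pEnt p (fun a => ((a.2.2.2 i : SY i), (a.1, a.2.1, a.2.2.1, TY (i : ℕ) a.2.2.2))) := c1.symm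
    have eFt0 : Ff (i : ℕ) = pEnt p (fun a => (a.1, a.2.1, a.2.2.1, TY (i : ℕ) a.2.2.2)) := rfl
    have hcond : condH μ (Y i) (fun ω => (X0 i ω, X1 i ω, X2 i ω))
        = entH μ (fun ω => (Y i ω, (X0 i ω, X1 i ω, X2 i ω)))
          - entH μ (fun ω => (X0 i ω, X1 i ω, X2 i ω)) := rfl
    rw [hcond, b1, b2, eFt1, eFt0]
    exact hred'
  have hsum : ∑ i : Fin t, (Ff ((i : ℕ)+1) - Ff (i : ℕ))
      = ∑ i, condH μ (Y i) (fun ω => (X0 i ω, X1 i ω, X2 i ω)) := by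
    have h1 : ∑ i : Fin t, (Ff ((i : ℕ)+1) - Ff (i : ℕ)) = Ff t - Ff 0 := by
      rw [Fin.sum_univ_eq_sum_range (fun k => Ff (k+1) - Ff k) t]
      exact Finset.sum_range_sub Ff t
    rw [h1, ← hmemoryless]
    have eFt : Ff t = entH μ (fun ω => ((fun j => Y j ω),
        ((fun j => X0 j ω), (fun j => X1 j ω), (fun j => X2 j ω)))) := by
      have c : pEnt p (fun a => (a.1, a.2.1, a.2.2.1, TY t a.2.2.2))
          = pEnt p (fun a => (a.2.2.2, (a.1, a.2.1, a.2.2.1))) := by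
        refine pEnt_congr p _ _ fun x y => ?_
        simp only [Prod.mk.injEq, hTYiff]
        constructor
        · rintro ⟨h2, h3, h4, h5⟩
          exact ⟨funext fun j => h5 j j.isLt, h2, h3, h4⟩
        · rintro ⟨h1', h2, h3, h4⟩
          exact ⟨h2, h3, h4, fun j _ => congrFun h1' j⟩
      have b : entH μ (fun ω => ((fun j => Y j ω),
          ((fun j => X0 j ω), (fun j => X1 j ω), (fun j => X2 j ω))))
          = pEnt p (fun a => (a.2.2.2, (a.1, a.2.1, a.2.2.1))) :=
        entH_eq_pent μ Z hZ (fun a => (a.2.2.2, (a.1, a.2.1, a.2.2.1)))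
      rw [b]; exact c
    have eF0 : Ff 0 = entH μ (fun ω => ((fun j => X0 j ω), (fun j => X1 j ω), (fun j => X2 j ω))) := by
      have c : pEnt p (fun a => (a.1, a.2.1, a.2.2.1, TY 0 a.2.2.2))
          = pEnt p (fun a => (a.1, a.2.1, a.2.2.1)) := by
        refine pEnt_congr p _ _ fun x y => ?_
        simp only [Prod.mk.injEq, hTYiff]
        constructor
        · rintro ⟨h2, h3, h4, h5⟩; exact ⟨h2, h3, h4⟩
        · rintro ⟨h2, h3, h4⟩; exact ⟨h2, h3, h4, fun j hj => absurd hj (by omega)⟩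
      have b : entH μ (fun ω => ((fun j => X0 j ω), (fun j => X1 j ω), (fun j => X2 j ω)))
          = pEnt p (fun a => (a.1, a.2.1, a.2.2.1)) :=
        entH_eq_pent μ Z hZ (fun a => (a.1, a.2.1, a.2.2.1))
      rw [b]; exact c
    rw [eFt, eF0]
    rfl
  have hMar : ∀ i : Fin t, Ff ((i : ℕ)+1) - Ff (i : ℕ)
      = condH μ (Y i) (fun ω => (X0 i ω, X1 i ω, X2 i ω)) := by
    intro i
    exact (Finset.sum_eq_sum_iff_of_le (fun i _ => hle i)).1 hsum i (Finset.mem_univ i)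
  have step2 : ∀ i : Fin t,
      E ((i : ℕ)+1) ((i : ℕ)+1) - E ((i : ℕ)+1) (i : ℕ) - E t ((i : ℕ)+1) + E t (i : ℕ)
        ≤ condMI μ (X1 i) (Y i) (fun ω => (X0 i ω, X2 i ω)) := by
    intro i
    have hT0i : ∀ x : ∀ j, S0 j, T0 ((i : ℕ)+1) x i = x i := by
      intro x; simp only [hT0]; rw [if_pos (Nat.lt_succ_self _)]
    have hGpt : ∀ a : ((∀ j, S0 j) × (∀ j, S1 j) × (∀ j, S2 j) × (∀ j, SY j)),
        G i (T0 ((i : ℕ)+1) a.1) (TY (i : ℕ) a.2.2.2) = G i a.1 a.2.2.2 := by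
      intro a
      refine hGdep i _ _ _ _ (fun j hj => ?_) (fun j hj => ?_)
      · simp only [hT0]; rw [if_pos (Nat.lt_succ_of_lt (Fin.lt_def.mp hj))]
      · simp only [hTY]; rw [if_pos (Fin.lt_def.mp hj)]
    -- ae substitutions
    have haeP : (fun ω => ((X0 i ω, X2 i ω) : S0 i × S2 i)) =ᵐ[μ]
        (fun ω => ((X0 i ω, G i (fun j => X0 j ω) (fun j => Y j ω)) : S0 i × S2 i)) := by
      filter_upwards [hGae i] with ω h
      rw [h]
    have haeYP : (fun ω => ((Y i ω, X0 i ω, X2 i ω) : SY i × S0 i × S2 i)) =ᵐ[μ]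
        (fun ω => ((Y i ω, X0 i ω, G i (fun j => X0 j ω) (fun j => Y j ω)) : SY i × S0 i × S2 i)) := by
      filter_upwards [hGae i] with ω h
      rw [h]
    -- bridges
    have bP : entH μ (fun ω => ((X0 i ω, X2 i ω) : S0 i × S2 i))
        = pEnt p (fun a => ((a.1 i, G i a.1 a.2.2.2) : S0 i × S2 i)) := by
      rw [entH_congr_ae μ haeP]
      exact entH_eq_pent μ Z hZ (fun a => ((a.1 i, G i a.1 a.2.2.2) : S0 i × S2 i))
    have bYP : entH μ (fun ω => ((Y i ω, X0 i ω, X2 i ω) : SY i × S0 i × S2 i))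
        = pEnt p (fun a => ((a.2.2.2 i, a.1 i, G i a.1 a.2.2.2) : SY i × S0 i × S2 i)) := by
      rw [entH_congr_ae μ haeYP]
      exact entH_eq_pent μ Z hZ (fun a => ((a.2.2.2 i, a.1 i, G i a.1 a.2.2.2) : SY i × S0 i × S2 i))
    -- reduction A
    have redA := pEnt_cond_reduce hp0 hp1 (fun a => (a.2.2.2 i : SY i))
      (fun a => (T0 ((i : ℕ)+1) a.1, TY (i : ℕ) a.2.2.2))
      (fun x => ((x.1 i, G i x.1 x.2) : S0 i × S2 i))
    have redA' : pEnt p (fun a => ((a.2.2.2 i : SY i), (T0 ((i : ℕ)+1) a.1, TY (i : ℕ) a.2.2.2)))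
        - pEnt p (fun a => (T0 ((i : ℕ)+1) a.1, TY (i : ℕ) a.2.2.2))
        ≤ pEnt p (fun a => ((a.2.2.2 i, T0 ((i : ℕ)+1) a.1 i,
            G i (T0 ((i : ℕ)+1) a.1) (TY (i : ℕ) a.2.2.2)) : SY i × S0 i × S2 i))
          - pEnt p (fun a => ((T0 ((i : ℕ)+1) a.1 i,
            G i (T0 ((i : ℕ)+1) a.1) (TY (i : ℕ) a.2.2.2)) : S0 i × S2 i)) := redA
    have cg2 : pEnt p (fun a => ((a.2.2.2 i, T0 ((i : ℕ)+1) a.1 i,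
            G i (T0 ((i : ℕ)+1) a.1) (TY (i : ℕ) a.2.2.2)) : SY i × S0 i × S2 i))
        = pEnt p (fun a => ((a.2.2.2 i, a.1 i, G i a.1 a.2.2.2) : SY i × S0 i × S2 i)) :=
      congrArg (pEnt p) (funext fun a => by rw [hGpt a, hT0i a.1])
    have cg3 : pEnt p (fun a => ((T0 ((i : ℕ)+1) a.1 i,
            G i (T0 ((i : ℕ)+1) a.1) (TY (i : ℕ) a.2.2.2)) : S0 i × S2 i))
        = pEnt p (fun a => ((a.1 i, G i a.1 a.2.2.2) : S0 i × S2 i)) :=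
      congrArg (pEnt p) (funext fun a => by rw [hGpt a, hT0i a.1])
    have congrA : pEnt p (fun a => ((a.2.2.2 i : SY i), (T0 ((i : ℕ)+1) a.1, TY (i : ℕ) a.2.2.2)))
        = pEnt p (fun a => (T0 ((i : ℕ)+1) a.1, TY ((i : ℕ)+1) a.2.2.2)) := by
      refine pEnt_congr p _ _ fun x y => ?_
      simp only [Prod.mk.injEq, hTYiff]
      constructor
      · rintro ⟨h1, h2, h3⟩
        refine ⟨h2, fun j hj => ?_⟩
        by_cases hjk : (j : ℕ) < (i : ℕ)
        · exact h3 j hjk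
        · have hji : j = i := Fin.ext (by omega)
          rw [hji]; exact h1
      · rintro ⟨h2, h3⟩
        exact ⟨h3 i (by omega), h2, fun j hj => h3 j (by omega)⟩
    -- reduction B
    have redB := pEnt_cond_reduce hp0 hp1 (fun a => (a.2.2.2 i : SY i))
      (fun a => (a.1, a.2.1, a.2.2.1, TY (i : ℕ) a.2.2.2))
      (fun x => ((T0 t x.1, x.2.2.2) : (∀ j, S0 j) × (∀ j, SY j)))
    have redB' : pEnt p (fun a => ((a.2.2.2 i : SY i), (a.1, a.2.1, a.2.2.1, TY (i : ℕ) a.2.2.2)))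
        - pEnt p (fun a => (a.1, a.2.1, a.2.2.1, TY (i : ℕ) a.2.2.2))
        ≤ pEnt p (fun a => ((a.2.2.2 i : SY i), (T0 t a.1, TY (i : ℕ) a.2.2.2)))
          - pEnt p (fun a => (T0 t a.1, TY (i : ℕ) a.2.2.2)) := redB
    have congrB1 : pEnt p (fun a => ((a.2.2.2 i : SY i), (a.1, a.2.1, a.2.2.1, TY (i : ℕ) a.2.2.2)))
        = pEnt p (fun a => (a.1, a.2.1, a.2.2.1, TY ((i : ℕ)+1) a.2.2.2)) := by
      refine pEnt_congr p _ _ fun x y => ?_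
      simp only [Prod.mk.injEq, hTYiff]
      constructor
      · rintro ⟨h1, h2, h3, h4, h5⟩
        refine ⟨h2, h3, h4, fun j hj => ?_⟩
        by_cases hjk : (j : ℕ) < (i : ℕ)
        · exact h5 j hjk
        · have hji : j = i := Fin.ext (by omega)
          rw [hji]; exact h1
      · rintro ⟨h2, h3, h4, h5⟩
        exact ⟨h5 i (by omega), h2, h3, h4, fun j hj => h5 j (by omega)⟩
    have congrB2 : pEnt p (fun a => ((a.2.2.2 i : SY i), (T0 t a.1, TY (i : ℕ) a.2.2.2)))
        = pEnt p (fun a => (T0 t a.1, TY ((i : ℕ)+1) a.2.2.2)) := by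
      refine pEnt_congr p _ _ fun x y => ?_
      simp only [Prod.mk.injEq, hTYiff]
      constructor
      · rintro ⟨h1, h2, h3⟩
        refine ⟨h2, fun j hj => ?_⟩
        by_cases hjk : (j : ℕ) < (i : ℕ)
        · exact h3 j hjk
        · have hji : j = i := Fin.ext (by omega)
          rw [hji]; exact h1
      · rintro ⟨h2, h3⟩
        exact ⟨h3 i (by omega), h2, fun j hj => h3 j (by omega)⟩
    -- condMI expansion
    have hcmi : condMI μ (X1 i) (Y i) (fun ω => (X0 i ω, X2 i ω))
        = entH μ (fun ω => ((X1 i ω, X0 i ω, X2 i ω) : S1 i × S0 i × S2 i))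
          + entH μ (fun ω => ((Y i ω, X0 i ω, X2 i ω) : SY i × S0 i × S2 i))
          - entH μ (fun ω => ((X1 i ω, Y i ω, X0 i ω, X2 i ω) : S1 i × SY i × S0 i × S2 i))
          - entH μ (fun ω => ((X0 i ω, X2 i ω) : S0 i × S2 i)) := rfl
    -- bridges for the X1 terms
    have bT1 : entH μ (fun ω => ((X1 i ω, X0 i ω, X2 i ω) : S1 i × S0 i × S2 i))
        = pEnt p (fun a => ((a.2.1 i, a.1 i, a.2.2.1 i) : S1 i × S0 i × S2 i)) :=
      entH_eq_pent μ Z hZ (fun a => ((a.2.1 i, a.1 i, a.2.2.1 i) : S1 i × S0 i × S2 i))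
    have bT3 : entH μ (fun ω => ((X1 i ω, Y i ω, X0 i ω, X2 i ω) : S1 i × SY i × S0 i × S2 i))
        = pEnt p (fun a => ((a.2.1 i, a.2.2.2 i, a.1 i, a.2.2.1 i) : S1 i × SY i × S0 i × S2 i)) :=
      entH_eq_pent μ Z hZ (fun a => ((a.2.1 i, a.2.2.2 i, a.1 i, a.2.2.1 i) : S1 i × SY i × S0 i × S2 i))
    have cT1 : pEnt p (fun a => ((a.2.1 i, a.1 i, a.2.2.1 i) : S1 i × S0 i × S2 i))
        = pEnt p (fun a => ((a.1 i, a.2.1 i, a.2.2.1 i) : S0 i × S1 i × S2 i)) := by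
      refine pEnt_congr p _ _ fun x y => ?_
      simp only [Prod.mk.injEq]
      tauto
    have cT3 : pEnt p (fun a => ((a.2.1 i, a.2.2.2 i, a.1 i, a.2.2.1 i) : S1 i × SY i × S0 i × S2 i))
        = pEnt p (fun a => ((a.2.2.2 i : SY i), ((a.1 i, a.2.1 i, a.2.2.1 i) : S0 i × S1 i × S2 i))) := by
      refine pEnt_congr p _ _ fun x y => ?_
      simp only [Prod.mk.injEq]
      tauto
    -- condH bridge (as in hle)
    have b1 : entH μ (fun ω => (Y i ω, (X0 i ω, X1 i ω, X2 i ω)))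
        = pEnt p (fun a => ((a.2.2.2 i : SY i), ((a.1 i, a.2.1 i, a.2.2.1 i) : S0 i × S1 i × S2 i))) :=
      entH_eq_pent μ Z hZ (fun a => ((a.2.2.2 i : SY i), ((a.1 i, a.2.1 i, a.2.2.1 i) : S0 i × S1 i × S2 i)))
    have b2 : entH μ (fun ω => (X0 i ω, X1 i ω, X2 i ω))
        = pEnt p (fun a => ((a.1 i, a.2.1 i, a.2.2.1 i) : S0 i × S1 i × S2 i)) :=
      entH_eq_pent μ Z hZ (fun a => ((a.1 i, a.2.1 i, a.2.2.1 i) : S0 i × S1 i × S2 i))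
    have hcond : condH μ (Y i) (fun ω => (X0 i ω, X1 i ω, X2 i ω))
        = entH μ (fun ω => (Y i ω, (X0 i ω, X1 i ω, X2 i ω)))
          - entH μ (fun ω => (X0 i ω, X1 i ω, X2 i ω)) := rfl
    have hMi := hMar i
    -- E identifications (by rfl)
    have hE1 : E ((i : ℕ)+1) ((i : ℕ)+1) = pEnt p (fun a => (T0 ((i : ℕ)+1) a.1, TY ((i : ℕ)+1) a.2.2.2)) := rfl
    have hE2 : E ((i : ℕ)+1) (i : ℕ) = pEnt p (fun a => (T0 ((i : ℕ)+1) a.1, TY (i : ℕ) a.2.2.2)) := rfl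
    have hE3 : E t ((i : ℕ)+1) = pEnt p (fun a => (T0 t a.1, TY ((i : ℕ)+1) a.2.2.2)) := rfl
    have hE4 : E t (i : ℕ) = pEnt p (fun a => (T0 t a.1, TY (i : ℕ) a.2.2.2)) := rfl
    have hF1 : Ff ((i : ℕ)+1) = pEnt p (fun a => (a.1, a.2.1, a.2.2.1, TY ((i : ℕ)+1) a.2.2.2)) := rfl
    have hF0 : Ff (i : ℕ) = pEnt p (fun a => (a.1, a.2.1, a.2.2.1, TY (i : ℕ) a.2.2.2)) := rfl
    rw [hcmi]
    rw [hcond, b1, b2] at hMi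
    linarith [redA', redB', cg2, cg3, congrA, congrB1, congrB2, bP, bYP, bT1, bT3, cT1, cT3, hMi,
      hE1, hE2, hE3, hE4, hF1, hF0]
  have step3 : ∑ i : Fin t, (E ((i : ℕ)+1) 0 - E (i : ℕ) 0 + E (i : ℕ) (i : ℕ) - E ((i : ℕ)+1) (i : ℕ))
      = ∑ i : Fin t, (E ((i : ℕ)+1) ((i : ℕ)+1) - E ((i : ℕ)+1) (i : ℕ) - E t ((i : ℕ)+1) + E t (i : ℕ)) := by
    have hA : ∑ i : Fin t, (E ((i : ℕ)+1) 0 - E (i : ℕ) 0) = E t 0 - E 0 0 := by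
      rw [Fin.sum_univ_eq_sum_range (fun k => E (k+1) 0 - E k 0) t]
      exact Finset.sum_range_sub (fun k => E k 0) t
    have hB : ∑ i : Fin t, (E ((i : ℕ)+1) ((i : ℕ)+1) - E (i : ℕ) (i : ℕ)) = E t t - E 0 0 := by
      rw [Fin.sum_univ_eq_sum_range (fun k => E (k+1) (k+1) - E k k) t]
      exact Finset.sum_range_sub (fun k => E k k) t
    have hC : ∑ i : Fin t, (E t ((i : ℕ)+1) - E t (i : ℕ)) = E t t - E t 0 := by
      rw [Fin.sum_univ_eq_sum_range (fun k => E t (k+1) - E t k) t]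
      exact Finset.sum_range_sub (fun k => E t k) t
    have e1 : ∀ i : Fin t, (E ((i : ℕ)+1) 0 - E (i : ℕ) 0 + E (i : ℕ) (i : ℕ) - E ((i : ℕ)+1) (i : ℕ))
        = (E ((i : ℕ)+1) ((i : ℕ)+1) - E ((i : ℕ)+1) (i : ℕ) - E t ((i : ℕ)+1) + E t (i : ℕ))
          + ((E ((i : ℕ)+1) 0 - E (i : ℕ) 0) - (E ((i : ℕ)+1) ((i : ℕ)+1) - E (i : ℕ) (i : ℕ))
            + (E t ((i : ℕ)+1) - E t (i : ℕ))) := by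
      intro i; ring
    have h2 : ∑ i : Fin t, ((E ((i : ℕ)+1) 0 - E (i : ℕ) 0) - (E ((i : ℕ)+1) ((i : ℕ)+1) - E (i : ℕ) (i : ℕ))
        + (E t ((i : ℕ)+1) - E t (i : ℕ))) = 0 := by
      rw [Finset.sum_add_distrib, Finset.sum_sub_distrib, hA, hB, hC]
      ring
    calc ∑ i : Fin t, (E ((i : ℕ)+1) 0 - E (i : ℕ) 0 + E (i : ℕ) (i : ℕ) - E ((i : ℕ)+1) (i : ℕ))
        = ∑ i : Fin t, ((E ((i : ℕ)+1) ((i : ℕ)+1) - E ((i : ℕ)+1) (i : ℕ) - E t ((i : ℕ)+1) + E t (i : ℕ))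
          + ((E ((i : ℕ)+1) 0 - E (i : ℕ) 0) - (E ((i : ℕ)+1) ((i : ℕ)+1) - E (i : ℕ) (i : ℕ))
            + (E t ((i : ℕ)+1) - E t (i : ℕ)))) := Finset.sum_congr rfl (fun i _ => e1 i)
      _ = ∑ i : Fin t, (E ((i : ℕ)+1) ((i : ℕ)+1) - E ((i : ℕ)+1) (i : ℕ) - E t ((i : ℕ)+1) + E t (i : ℕ))
          + ∑ i : Fin t, ((E ((i : ℕ)+1) 0 - E (i : ℕ) 0) - (E ((i : ℕ)+1) ((i : ℕ)+1) - E (i : ℕ) (i : ℕ))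
            + (E t ((i : ℕ)+1) - E t (i : ℕ))) := Finset.sum_add_distrib
      _ = ∑ i : Fin t, (E ((i : ℕ)+1) ((i : ℕ)+1) - E ((i : ℕ)+1) (i : ℕ) - E t ((i : ℕ)+1) + E t (i : ℕ)) := by
          rw [h2, add_zero]
  calc ∑ i, mutI μ (X0 i) (X2 i)
      ≤ ∑ i : Fin t, (E ((i : ℕ)+1) 0 - E (i : ℕ) 0 + E (i : ℕ) (i : ℕ) - E ((i : ℕ)+1) (i : ℕ)) :=
        Finset.sum_le_sum fun i _ => step1 i
    _ = ∑ i : Fin t, (E ((i : ℕ)+1) ((i : ℕ)+1) - E ((i : ℕ)+1) (i : ℕ) - E t ((i : ℕ)+1) + E t (i : ℕ)) := step3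
    _ ≤ ∑ i, condMI μ (X1 i) (Y i) (fun ω => (X0 i ω, X2 i ω)) :=
        Finset.sum_le_sum fun i _ => step2 i
end
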